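/- arXiv:2407.05217 — 5 statements merged into one kernel-verified Lean document; each statement's English description precedes it below -/
import Mathlib

section
/- Let E be a Banach space, W a linear subspace of E, and suppose E \ W is spaceable, i.e., there exists an infinite-dimensional closed subspace F of E with F ∩ W = {0}. Then there exists a sequence (xₙ)ₙ of elements of F with Σₙ ‖xₙ‖ < ∞ that is ℓ∞-independent, such that for every bounded scalar sequence (tₙ)ₙ ∈ ℓ∞ the series Σₙ tₙ xₙ converges in E to a vector of (E \ W) ∪ {0}; in particular E \ W is [(xₙ)ₙ, ℓ∞]-lineable. -/
open Filter Topology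

/-- The series `∑ₙ f n` converges to `s`: its partial sums tend to `s`. -/
def HasSeriesSum {E : Type*} [AddCommMonoid E] [TopologicalSpace E] (f : ℕ → E) (s : E) : Prop :=
  Filter.Tendsto (fun N => ∑ n ∈ Finset.range N, f n) Filter.atTop (nhds s)

lemma exists_pair_aux {𝕜 : Type*} [RCLike 𝕜] {E : Type*} [NormedAddCommGroup E]
    [NormedSpace 𝕜 E] (F : Submodule 𝕜 E) (hFdim : ¬ Module.Finite 𝕜 F) {n : ℕ}
    (gs : Fin n → (E →L[𝕜] 𝕜)) :
    ∃ p : E × (E →L[𝕜] 𝕜), p.1 ∈ F ∧ ‖p.1‖ = 1 ∧ p.2 p.1 = 1 ∧ ∀ m : Fin n, gs m p.1 = 0 := by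
  set φ : F →ₗ[𝕜] (Fin n → 𝕜) :=
    LinearMap.pi (fun m => ((gs m).toLinearMap).comp F.subtype) with hφ
  have hker : LinearMap.ker φ ≠ ⊥ := by
    intro h
    exact hFdim (Module.Finite.of_injective φ (LinearMap.ker_eq_bot.mp h))
  obtain ⟨y, hy, hy0⟩ := Submodule.exists_mem_ne_zero_of_ne_bot hker
  have hyg : ∀ m : Fin n, gs m (y : E) = 0 := by
    intro m
    have : φ y m = 0 := by rw [hy]; rfl
    simpa [hφ, LinearMap.pi_apply] using this
  have hyE : (y : E) ≠ 0 := by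
    simpa [Submodule.coe_eq_zero] using hy0
  set e : E := ((‖(y : E)‖ : 𝕜))⁻¹ • (y : E) with he
  have hne : ‖e‖ = 1 := by
    rw [he, norm_smul, norm_inv, RCLike.norm_ofReal, abs_norm]
    field_simp [norm_ne_zero_iff.mpr hyE]
  have heF : e ∈ F := F.smul_mem _ y.2
  have heg : ∀ m : Fin n, gs m e = 0 := by
    intro m; rw [he, map_smul, hyg m, smul_zero]
  have he0 : e ≠ 0 := by
    intro h; rw [h, norm_zero] at hne; norm_num at hne
  obtain ⟨g, hg1, hge⟩ := exists_dual_vector 𝕜 e (norm_ne_zero_iff.mpr he0)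
  refine ⟨(e, g), heF, hne, ?_, heg⟩
  simp only [hge, hne, RCLike.ofReal_one]

noncomputable def pickSeq {𝕜 : Type*} [RCLike 𝕜] {E : Type*} [NormedAddCommGroup E]
    [NormedSpace 𝕜 E] (F : Submodule 𝕜 E) (hFdim : ¬ Module.Finite 𝕜 F) :
    ℕ → E × (E →L[𝕜] 𝕜)
  | n => Classical.choose
      (exists_pair_aux F hFdim (fun m : Fin n => (pickSeq F hFdim m).2))
  termination_by n => n
  decreasing_by all_goals exact m.isLt

lemma pickSeq_spec {𝕜 : Type*} [RCLike 𝕜] {E : Type*} [NormedAddCommGroup E]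
    [NormedSpace 𝕜 E] (F : Submodule 𝕜 E) (hFdim : ¬ Module.Finite 𝕜 F) (n : ℕ) :
    (pickSeq F hFdim n).1 ∈ F ∧ ‖(pickSeq F hFdim n).1‖ = 1 ∧
    (pickSeq F hFdim n).2 (pickSeq F hFdim n).1 = 1 ∧
    ∀ m < n, (pickSeq F hFdim m).2 (pickSeq F hFdim n).1 = 0 := by
  have key : pickSeq F hFdim n = Classical.choose
      (exists_pair_aux F hFdim (fun m : Fin n => (pickSeq F hFdim m).2)) := by
    conv_lhs => rw [pickSeq]
  have h := Classical.choose_spec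
      (exists_pair_aux F hFdim (fun m : Fin n => (pickSeq F hFdim m).2))
  rw [← key] at h
  exact ⟨h.1, h.2.1, h.2.2.1, fun m hm => h.2.2.2 ⟨m, hm⟩⟩

/-- Let `E` be a Banach space, `W` a linear subspace, and suppose `E \ W` is spaceable,
witnessed by an infinite-dimensional closed subspace `F` with `F ∩ W = {0}`. Then there is
a sequence `(xₙ)ₙ` of elements of `F` with `∑ₙ ‖xₙ‖ < ∞` which is `ℓ∞`-independent, and such
that for every bounded scalar sequence `(tₙ)ₙ` the series `∑ₙ tₙ xₙ` converges in `E` to a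
vector of `(E \ W) ∪ {0}`; in particular `E \ W` is `[(xₙ)ₙ, ℓ∞]`-lineable. -/
theorem complement_ellInfty_lineable_of_spaceable
    {𝕜 : Type*} [RCLike 𝕜] {E : Type*} [NormedAddCommGroup E] [NormedSpace 𝕜 E]
    [CompleteSpace E] (W : Submodule 𝕜 E) (F : Submodule 𝕜 E)
    (hFclosed : IsClosed (F : Set E)) (hFdim : ¬ Module.Finite 𝕜 F)
    (hFW : F ⊓ W = ⊥) :
    ∃ x : ℕ → E, (∀ n, x n ∈ F) ∧ Summable (fun n => ‖x n‖) ∧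
      (∀ c : ℕ → 𝕜, (∃ C : ℝ, ∀ n, ‖c n‖ ≤ C) →
        HasSeriesSum (fun n => c n • x n) (0 : E) → c = 0) ∧
      (∀ t : ℕ → 𝕜, (∃ C : ℝ, ∀ n, ‖t n‖ ≤ C) →
        ∃ s : E, HasSeriesSum (fun n => t n • x n) s ∧ s ∈ ((W : Set E)ᶜ ∪ {0})) := by
  set e : ℕ → E := fun n => (pickSeq F hFdim n).1 with he
  set g : ℕ → E →L[𝕜] 𝕜 := fun n => (pickSeq F hFdim n).2 with hg
  have spec := pickSeq_spec F hFdim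
  set x : ℕ → E := fun n => ((2 : 𝕜) ^ n)⁻¹ • e n with hx
  have hxF : ∀ n, x n ∈ F := fun n => F.smul_mem _ (spec n).1
  have hxnorm : ∀ n, ‖x n‖ = (1 / 2 : ℝ) ^ n := by
    intro n
    rw [hx]
    simp only [norm_smul, norm_inv, norm_pow, RCLike.norm_ofNat, (spec n).2.1, mul_one]
    rw [one_div, inv_pow]
    rw [show ‖e n‖ = 1 from (spec n).2.1, mul_one]
  have hxsum : Summable (fun n => ‖x n‖) := by
    simp only [hxnorm]
    exact summable_geometric_two
  -- convergence of ∑ t n • x n for bounded t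
  have hconv : ∀ (t : ℕ → 𝕜), (∃ C : ℝ, ∀ n, ‖t n‖ ≤ C) →
      Summable (fun n => t n • x n) := by
    rintro t ⟨C, hC⟩
    apply Summable.of_norm_bounded (g := fun n => C * (1 / 2 : ℝ) ^ n)
      (summable_geometric_two.mul_left C)
    intro n
    rw [norm_smul, hxnorm]
    exact mul_le_mul_of_nonneg_right (hC n) (by positivity)
  refine ⟨x, hxF, hxsum, ?_, ?_⟩
  · -- ℓ∞-independence
    intro c hc h0
    have hsumc := hconv c hc
    have htsum0 : ∑' n, c n • x n = 0 :=
      tendsto_nhds_unique hsumc.hasSum.tendsto_sum_nat h0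
    funext n
    induction n using Nat.strong_induction_on with
    | _ n ih =>
      have hmap : (g n) (∑' k, c k • x k) = ∑' k, (g n) (c k • x k) :=
        ContinuousLinearMap.map_tsum _ hsumc
      have hzero : ∀ k, k ≠ n → (g n) (c k • x k) = 0 := by
        intro k hk
        rcases lt_or_gt_of_ne hk with hlt | hgt
        · rw [ih k hlt]
          simp
        · rw [hx]
          simp only [map_smul, smul_eq_mul]
          rw [show (g n) (e k) = 0 from (spec k).2.2.2 n hgt]
          ring
      have hsingle : ∑' k, (g n) (c k • x k) = (g n) (c n • x n) :=
        tsum_eq_single n hzero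
      have : (g n) (c n • x n) = 0 := by
        rw [← hsingle, ← hmap, htsum0, map_zero]
      rw [hx] at this
      simp only [map_smul, smul_eq_mul, (spec n).2.2.1, mul_one] at this
      rw [show (g n) (e n) = 1 from (spec n).2.2.1, mul_one] at this
      rcases mul_eq_zero.mp this with h | h
      · exact h
      · exact absurd h (inv_ne_zero (pow_ne_zero _ two_ne_zero))
  · -- convergence into (E \ W) ∪ {0}
    intro t ht
    have hsumt := hconv t ht
    refine ⟨∑' n, t n • x n, hsumt.hasSum.tendsto_sum_nat, ?_⟩
    have hsF : (∑' n, t n • x n) ∈ F := by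
      refine hFclosed.mem_of_tendsto hsumt.hasSum.tendsto_sum_nat
        (Eventually.of_forall fun N => ?_)
      exact Submodule.sum_mem F fun k _ => F.smul_mem _ (hxF k)
    by_cases hW : (∑' n, t n • x n) ∈ W
    · right
      have : (∑' n, t n • x n) ∈ F ⊓ W := ⟨hsF, hW⟩
      rw [hFW] at this
      simpa using this
    · exact Or.inl hW
end

section
/- Let E be a Banach space and F an infinite-dimensional closed linear subspace of E. Then the following conditions are equivalent: (1) E \ F is [(xₙ)ₙ, 𝒮]-lineable for some closed linear subspace 𝒮 of ℓ∞ containing c₀ and some 𝒮-independent sequence (xₙ)ₙ of elements of E; (2) E \ F is spaceable; (3) F has infinite codimension in E, i.e., dim(E/F) = ∞. -/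
open Filter Topology

/-- A set `A` is spaceable if `A ∪ {0}` contains a closed infinite-dimensional subspace. -/
def Spaceable (𝕜 : Type*) {E : Type*} [Semiring 𝕜] [AddCommMonoid E] [Module 𝕜 E]
    [TopologicalSpace E] (A : Set E) : Prop :=
  ∃ F : Submodule 𝕜 E, IsClosed (F : Set E) ∧ ¬ Module.Finite 𝕜 F ∧ (F : Set E) ⊆ A ∪ {0}

/-- The Banach space `ℓ∞` of bounded scalar sequences. -/
noncomputable abbrev ellInfty (𝕜 : Type*) [RCLike 𝕜] := lp (fun _ : ℕ => 𝕜) ⊤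

/-- `(xₙ)ₙ` is `𝒮`-independent: whenever `(cₙ)ₙ ∈ 𝒮` and `∑ₙ cₙ xₙ = 0`, all `cₙ = 0`. -/
def SIndep (𝕜 : Type*) [RCLike 𝕜] {E : Type*} [AddCommMonoid E] [Module 𝕜 E]
    [TopologicalSpace E] (S : Submodule 𝕜 (ellInfty 𝕜)) (x : ℕ → E) : Prop :=
  ∀ c ∈ S, HasSeriesSum (fun n => (c : ∀ _ : ℕ, 𝕜) n • x n) (0 : E) → c = 0

/-- `A` is `[(xₙ)ₙ, 𝒮]`-lineable: for each `(cₙ)ₙ ∈ 𝒮` the series `∑ₙ cₙ xₙ` converges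
to a vector of `A ∪ {0}`. -/
def SeqSLineable (𝕜 : Type*) [RCLike 𝕜] {E : Type*} [AddCommMonoid E] [Module 𝕜 E]
    [TopologicalSpace E] (x : ℕ → E) (S : Submodule 𝕜 (ellInfty 𝕜)) (A : Set E) : Prop :=
  ∀ c ∈ S, ∃ s : E, HasSeriesSum (fun n => (c : ∀ _ : ℕ, 𝕜) n • x n) s ∧ s ∈ A ∪ {0}

/-- A closed subspace `𝒮` of `ℓ∞` containing `c₀`. -/
def IsClosedSupsetC0 (𝕜 : Type*) [RCLike 𝕜] (S : Submodule 𝕜 (ellInfty 𝕜)) : Prop :=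
  IsClosed (S : Set (ellInfty 𝕜)) ∧
    ∀ f : ellInfty 𝕜, Filter.Tendsto (fun n => (f : ∀ _ : ℕ, 𝕜) n) Filter.atTop (nhds 0) → f ∈ S

noncomputable def mazDelta (n : ℕ) : ℝ := Real.exp (-(Real.log 2 * (1/2 : ℝ)^(n+1)))

lemma mazDelta_pos (n : ℕ) : 0 < mazDelta n := Real.exp_pos _

lemma mazDelta_lt_one (n : ℕ) : mazDelta n < 1 := by
  apply Real.exp_lt_one_iff.mpr
  have h2 : (0:ℝ) < Real.log 2 := Real.log_pos (by norm_num)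
  have : (0:ℝ) < (1/2 : ℝ)^(n+1) := by positivity
  nlinarith

lemma mazDelta_prod (m n : ℕ) : (1/2 : ℝ) ≤ ∏ j ∈ Finset.Ico m n, mazDelta j := by
  unfold mazDelta
  rw [← Real.exp_sum]
  have hsum : ∑ j ∈ Finset.Ico m n, -(Real.log 2 * (1/2 : ℝ)^(j+1))
      = -(Real.log 2 * ∑ j ∈ Finset.Ico m n, (1/2 : ℝ)^(j+1)) := by
    rw [Finset.mul_sum, ← Finset.sum_neg_distrib]
  rw [hsum]
  have hs : ∑ j ∈ Finset.Ico m n, (1/2 : ℝ)^(j+1) ≤ 1 := by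
    have h1 : ∑ j ∈ Finset.Ico m n, (1/2 : ℝ)^(j+1) ≤ ∑ j ∈ Finset.range n, (1/2 : ℝ)^(j+1) := by
      apply Finset.sum_le_sum_of_subset_of_nonneg
      · intro j hj
        simp only [Finset.mem_range, Finset.mem_Ico] at *
        omega
      · intro j _ _; positivity
    have h2 : ∑ j ∈ Finset.range n, (1/2 : ℝ)^(j+1) = (1/2) * ∑ j ∈ Finset.range n, (1/2 : ℝ)^j := by
      rw [Finset.mul_sum]
      apply Finset.sum_congr rfl
      intro j _; ring
    have h3 := sum_geometric_two_le n
    calc ∑ j ∈ Finset.Ico m n, (1/2 : ℝ)^(j+1) ≤ (1/2) * ∑ j ∈ Finset.range n, (1/2 : ℝ)^j := by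
          rw [← h2]; exact h1
      _ ≤ (1/2) * 2 := by linarith
      _ = 1 := by norm_num
  have hlog : (0:ℝ) ≤ Real.log 2 := le_of_lt (Real.log_pos (by norm_num))
  calc (1/2 : ℝ) = Real.exp (-(Real.log 2)) := by
        rw [Real.exp_neg, Real.exp_log (by norm_num : (0:ℝ) < 2)]; norm_num
    _ ≤ Real.exp (-(Real.log 2 * ∑ j ∈ Finset.Ico m n, (1/2 : ℝ)^(j+1))) := by
        apply Real.exp_le_exp.mpr
        have := mul_le_mul_of_nonneg_left hs hlog
        linarith

section SemiAux
variable {𝕜 : Type*} [RCLike 𝕜] {G : Type*} [SeminormedAddCommGroup G] [NormedSpace 𝕜 G]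

lemma basic_ineq (y : ℕ → G)
    (hy : ∀ n, ∀ v ∈ Submodule.span 𝕜 (y '' Set.Iio n), ∀ t : 𝕜, mazDelta n * ‖v‖ ≤ ‖v + t • y n‖)
    (a : ℕ → 𝕜) (m n : ℕ) (h : m ≤ n) :
    ‖∑ i ∈ Finset.range m, a i • y i‖ ≤ 2 * ‖∑ i ∈ Finset.range n, a i • y i‖ := by
  have hmem : ∀ k, (∑ i ∈ Finset.range k, a i • y i) ∈ Submodule.span 𝕜 (y '' Set.Iio k) := by
    intro k
    apply Submodule.sum_mem
    intro i hi
    apply Submodule.smul_mem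
    apply Submodule.subset_span
    exact ⟨i, Finset.mem_range.mp hi, rfl⟩
  have key : ∀ k, m ≤ k →
      (∏ j ∈ Finset.Ico m k, mazDelta j) * ‖∑ i ∈ Finset.range m, a i • y i‖
        ≤ ‖∑ i ∈ Finset.range k, a i • y i‖ := by
    intro k hk
    induction k, hk using Nat.le_induction with
    | base => simp
    | succ k hk ih =>
      have step := hy k _ (hmem k) (a k)
      rw [Finset.sum_range_succ]
      calc (∏ j ∈ Finset.Ico m (k+1), mazDelta j) * ‖∑ i ∈ Finset.range m, a i • y i‖
          = mazDelta k * ((∏ j ∈ Finset.Ico m k, mazDelta j) * ‖∑ i ∈ Finset.range m, a i • y i‖) := by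
            rw [Finset.prod_Ico_succ_top hk]; ring
        _ ≤ mazDelta k * ‖∑ i ∈ Finset.range k, a i • y i‖ := by
            apply mul_le_mul_of_nonneg_left ih (le_of_lt (mazDelta_pos k))
        _ ≤ ‖(∑ i ∈ Finset.range k, a i • y i) + a k • y k‖ := step
  have hk := key n h
  have hprod := mazDelta_prod m n
  have hnn : (0:ℝ) ≤ ‖∑ i ∈ Finset.range m, a i • y i‖ := norm_nonneg _
  nlinarith [norm_nonneg (∑ i ∈ Finset.range n, a i • y i)]

lemma coeff_bound (y : ℕ → G) (hnorm : ∀ n, ‖y n‖ = 1)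
    (h2 : ∀ (a : ℕ → 𝕜) (m n : ℕ), m ≤ n →
      ‖∑ i ∈ Finset.range m, a i • y i‖ ≤ 2 * ‖∑ i ∈ Finset.range n, a i • y i‖)
    (a : ℕ → 𝕜) (m n : ℕ) (hmn : m < n) :
    ‖a m‖ ≤ 4 * ‖∑ i ∈ Finset.range n, a i • y i‖ := by
  have h1 : ‖a m‖ = ‖a m • y m‖ := by rw [norm_smul, hnorm m, mul_one]
  have hdecomp : a m • y m
      = (∑ i ∈ Finset.range (m+1), a i • y i) - ∑ i ∈ Finset.range m, a i • y i := by
    rw [Finset.sum_range_succ]; abel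
  rw [h1, hdecomp]
  have hb1 := h2 a (m+1) n hmn
  have hb2 := h2 a m n (le_of_lt (Nat.lt_of_lt_of_le (Nat.lt_succ_self m) hmn))
  calc ‖(∑ i ∈ Finset.range (m+1), a i • y i) - ∑ i ∈ Finset.range m, a i • y i‖
      ≤ ‖∑ i ∈ Finset.range (m+1), a i • y i‖ + ‖∑ i ∈ Finset.range m, a i • y i‖ :=
        norm_sub_le _ _
    _ ≤ 2 * ‖∑ i ∈ Finset.range n, a i • y i‖ + 2 * ‖∑ i ∈ Finset.range n, a i • y i‖ := by
        linarith
    _ = 4 * ‖∑ i ∈ Finset.range n, a i • y i‖ := by ring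

lemma series_indep (y : ℕ → G) (hnorm : ∀ n, ‖y n‖ = 1)
    (h2 : ∀ (a : ℕ → 𝕜) (m n : ℕ), m ≤ n →
      ‖∑ i ∈ Finset.range m, a i • y i‖ ≤ 2 * ‖∑ i ∈ Finset.range n, a i • y i‖)
    (d : ℕ → 𝕜) (hd : Tendsto (fun N => ∑ i ∈ Finset.range N, d i • y i) atTop (nhds 0))
    (m : ℕ) : d m = 0 := by
  have hnt : Tendsto (fun N => 4 * ‖∑ i ∈ Finset.range N, d i • y i‖) atTop (nhds 0) := by
    have := hd.norm
    simpa using this.const_mul (4:ℝ)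
  have hle : ∀ᶠ N in atTop, ‖d m‖ ≤ 4 * ‖∑ i ∈ Finset.range N, d i • y i‖ := by
    filter_upwards [eventually_gt_atTop m] with N hN
    exact coeff_bound y hnorm h2 d m N hN
  have : ‖d m‖ ≤ 0 := ge_of_tendsto hnt hle
  have := le_antisymm this (norm_nonneg _)
  exact norm_eq_zero.mp this

end SemiAux

section Main
variable {𝕜 : Type*} [RCLike 𝕜] {E : Type*} [NormedAddCommGroup E] [NormedSpace 𝕜 E]

lemma exists_norming_family (V : Submodule 𝕜 E) (hV : FiniteDimensional 𝕜 V) {ε : ℝ} (hε : 0 < ε) :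
    ∃ Φ : Finset (E →L[𝕜] 𝕜), (∀ f ∈ Φ, ‖f‖ ≤ 1) ∧
      ∀ v ∈ V, ∃ f ∈ Φ, (1 - ε) * ‖v‖ ≤ ‖f v‖ := by
  classical
  haveI := hV
  haveI : ProperSpace V := FiniteDimensional.proper 𝕜 V
  set Sp := Metric.sphere (0 : V) 1 with hSp
  have hcomp : IsCompact Sp := isCompact_sphere 0 1
  have hcov : Sp ⊆ ⋃ u : Sp, Metric.ball (u : V) ε := by
    intro v hv
    exact Set.mem_iUnion.2 ⟨⟨v, hv⟩, by simpa using hε⟩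
  obtain ⟨t, ht⟩ := hcomp.elim_finite_subcover (fun u : Sp => Metric.ball (u : V) ε)
    (fun _ => Metric.isOpen_ball) hcov
  have hnz : ∀ u : Sp, ((u : V) : E) ≠ 0 := by
    intro u
    have h1 : ‖(u : V)‖ = 1 := mem_sphere_zero_iff_norm.mp u.2
    have : ‖((u : V) : E)‖ = 1 := h1
    intro h; rw [h, norm_zero] at this; norm_num at this
  set g : Sp → (E →L[𝕜] 𝕜) := fun u => (exists_dual_vector 𝕜 ((u : V) : E) (norm_ne_zero_iff.mpr (hnz u))).choose with hg
  have hgspec : ∀ u : Sp, ‖g u‖ = 1 ∧ g u ((u : V) : E) = (‖((u : V) : E)‖ : 𝕜) :=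
    fun u => (exists_dual_vector 𝕜 ((u : V) : E) (norm_ne_zero_iff.mpr (hnz u))).choose_spec
  refine ⟨t.image g ∪ {0}, ?_, ?_⟩
  · intro f hf
    rcases Finset.mem_union.1 hf with hf | hf
    · obtain ⟨u, -, rfl⟩ := Finset.mem_image.1 hf
      exact le_of_eq (hgspec u).1
    · simp only [Finset.mem_singleton] at hf
      rw [hf]; simp
  · intro v hv
    by_cases h0 : v = 0
    · refine ⟨0, Finset.mem_union_right _ (Finset.mem_singleton_self 0), ?_⟩
      rw [h0]; simp
    · have hvn : (0:ℝ) < ‖v‖ := norm_pos_iff.2 h0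
      set vV : V := ⟨v, hv⟩ with hvV
      set u0 : V := ((‖v‖ : 𝕜))⁻¹ • vV with hu0
      have hu0mem : u0 ∈ Sp := by
        show u0 ∈ Metric.sphere (0 : V) 1
        rw [mem_sphere_zero_iff_norm, hu0, norm_smul]
        have : ‖vV‖ = ‖v‖ := rfl
        rw [this, norm_inv, RCLike.norm_ofReal, abs_of_pos hvn, inv_mul_cancel₀ (ne_of_gt hvn)]
      obtain ⟨u, hut, hball⟩ := Set.mem_iUnion₂.1 (ht hu0mem)
      have hdist : ‖u0 - (u : V)‖ < ε := by
        rw [← dist_eq_norm]; exact Metric.mem_ball.1 hball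
      refine ⟨g u, Finset.mem_union_left _ (Finset.mem_image_of_mem g hut), ?_⟩
      have hfu : ‖(g u) ((u : V) : E)‖ = 1 := by
        rw [(hgspec u).2]
        have h1 : ‖(u : V)‖ = 1 := mem_sphere_zero_iff_norm.mp u.2
        have : ‖((u : V) : E)‖ = 1 := h1
        rw [this]; simp
      -- ‖g u (u0)‖ ≥ 1 - ε
      have hkey : (1 - ε) ≤ ‖(g u) ((u0 : V) : E)‖ := by
        have hdiff : ‖(g u) (((u0 : V) : E) - ((u : V) : E))‖ ≤ ε := by
          calc ‖(g u) (((u0 : V) : E) - ((u : V) : E))‖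
              ≤ ‖g u‖ * ‖((u0 : V) : E) - ((u : V) : E)‖ := (g u).le_opNorm _
            _ ≤ 1 * ε := by
                apply mul_le_mul (le_of_eq (hgspec u).1) ?_ (norm_nonneg _) zero_le_one
                have : ((u0 : V) : E) - ((u : V) : E) = ((u0 - (u:V) : V) : E) := rfl
                rw [this]
                exact le_of_lt hdist
            _ = ε := one_mul ε
        have := norm_sub_norm_le ((g u) ((u : V) : E)) ((g u) (((u:V) : E) - ((u0 : V) : E)))
        have heq : (g u) ((u : V) : E) - (g u) (((u:V) : E) - ((u0 : V) : E)) = (g u) ((u0 : V) : E) := by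
          rw [← map_sub]; congr 1; abel
        rw [heq, hfu] at this
        have h2 : ‖(g u) (((u:V) : E) - ((u0 : V) : E))‖ ≤ ε := by
          rw [← norm_neg, ← map_neg]
          have : -((((u:V)) : E) - ((u0 : V) : E)) = ((u0 : V) : E) - ((u : V) : E) := by abel
          rw [this]; exact hdiff
        linarith
      -- conclude
      have hvu0 : ((u0 : V) : E) = ((‖v‖ : 𝕜))⁻¹ • v := rfl
      have hval : ‖(g u) v‖ = ‖v‖ * ‖(g u) ((u0 : V) : E)‖ := by
        rw [hvu0, map_smul, norm_smul, norm_inv, RCLike.norm_ofReal, abs_of_pos hvn]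
        field_simp
      rw [hval]
      calc (1 - ε) * ‖v‖ = ‖v‖ * (1 - ε) := mul_comm _ _
        _ ≤ ‖v‖ * ‖(g u) ((u0 : V) : E)‖ := mul_le_mul_of_nonneg_left hkey (norm_nonneg v)

lemma exists_avoiding (F : Submodule 𝕜 E) (hq : ¬ Module.Finite 𝕜 (E ⧸ F))
    (Φ : Finset (E →L[𝕜] 𝕜)) (Ψ : Finset ((E ⧸ F) →L[𝕜] 𝕜)) :
    ∃ x : E, x ∉ F ∧ (∀ f ∈ Φ, f x = 0) ∧ (∀ g ∈ Ψ, g (F.mkQ x) = 0) := by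
  classical
  set L1 : E →ₗ[𝕜] (Φ → 𝕜) := LinearMap.pi (fun f => ((f : Φ) : E →L[𝕜] 𝕜).toLinearMap) with hL1
  set L2 : E →ₗ[𝕜] (Ψ → 𝕜) :=
    LinearMap.pi (fun g => (((g : Ψ) : (E ⧸ F) →L[𝕜] 𝕜).toLinearMap).comp F.mkQ) with hL2
  set L : E →ₗ[𝕜] (Φ → 𝕜) × (Ψ → 𝕜) := L1.prod L2 with hL
  by_cases hK : LinearMap.ker L ≤ F
  · exfalso
    apply hq
    have hfin : Module.Finite 𝕜 (E ⧸ LinearMap.ker L) := by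
      have e := LinearMap.quotKerEquivRange L
      haveI : FiniteDimensional 𝕜 ((Φ → 𝕜) × (Ψ → 𝕜)) := by infer_instance
      haveI : FiniteDimensional 𝕜 (LinearMap.range L) := inferInstance
      exact Module.Finite.equiv e.symm
    have hmap : Function.Surjective ⇑(Submodule.mapQ (LinearMap.ker L) F LinearMap.id hK) := by
      intro z
      obtain ⟨w, rfl⟩ := Submodule.mkQ_surjective F z
      exact ⟨(LinearMap.ker L).mkQ w, by simp [Submodule.mapQ_apply]⟩
    exact Module.Finite.of_surjective _ hmap
  · rw [SetLike.not_le_iff_exists] at hK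
    obtain ⟨x, hxK, hxF⟩ := hK
    refine ⟨x, hxF, ?_, ?_⟩
    · intro f hf
      have := LinearMap.mem_ker.mp hxK
      have h1 : L1 x = 0 := by
        have := congrArg Prod.fst this
        simpa [hL] using this
      have := congrFun h1 ⟨f, hf⟩
      simpa [hL1] using this
    · intro g hg
      have := LinearMap.mem_ker.mp hxK
      have h2 : L2 x = 0 := by
        have := congrArg Prod.snd this
        simpa [hL] using this
      have := congrFun h2 ⟨g, hg⟩
      simpa [hL2] using this

lemma mazur_step (F : Submodule 𝕜 E) (hFc : IsClosed (F : Set E))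
    (hq : ¬ Module.Finite 𝕜 (E ⧸ F))
    (V : Submodule 𝕜 E) (hV : FiniteDimensional 𝕜 V)
    (W : Submodule 𝕜 (E ⧸ F)) (hW : FiniteDimensional 𝕜 W) {ε : ℝ} (hε : 0 < ε) :
    ∃ x : E, ‖F.mkQ x‖ = 1 ∧
      (∀ v ∈ V, ∀ t : 𝕜, (1 - ε) * ‖v‖ ≤ ‖v + t • x‖) ∧
      (∀ w ∈ W, ∀ t : 𝕜, (1 - ε) * ‖w‖ ≤ ‖w + t • F.mkQ x‖) := by
  haveI : IsClosed (F : Set E) := hFc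
  obtain ⟨Φ, hΦ1, hΦ2⟩ := exists_norming_family V hV hε
  obtain ⟨Ψ, hΨ1, hΨ2⟩ := exists_norming_family W hW hε
  obtain ⟨x₀, hx₀F, hx₀Φ, hx₀Ψ⟩ := exists_avoiding F hq Φ Ψ
  have hmkne : F.mkQ x₀ ≠ 0 := by
    rw [F.mkQ_apply, ne_eq, Submodule.Quotient.mk_eq_zero]
    exact hx₀F
  have hnpos : (0:ℝ) < ‖F.mkQ x₀‖ := norm_pos_iff.mpr hmkne
  set x : E := ((‖F.mkQ x₀‖ : 𝕜))⁻¹ • x₀ with hx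
  have hmkx : F.mkQ x = ((‖F.mkQ x₀‖ : 𝕜))⁻¹ • F.mkQ x₀ := by rw [hx, map_smul]
  refine ⟨x, ?_, ?_, ?_⟩
  · rw [hmkx, norm_smul, norm_inv, RCLike.norm_ofReal, abs_of_pos hnpos,
      inv_mul_cancel₀ (ne_of_gt hnpos)]
  · intro v hv t
    obtain ⟨f, hfΦ, hfv⟩ := hΦ2 v hv
    have hfx : f x = 0 := by
      rw [hx, map_smul, hx₀Φ f hfΦ, smul_zero]
    calc (1 - ε) * ‖v‖ ≤ ‖f v‖ := hfv
      _ = ‖f (v + t • x)‖ := by rw [map_add, map_smul, hfx, smul_zero, add_zero]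
      _ ≤ ‖f‖ * ‖v + t • x‖ := f.le_opNorm _
      _ ≤ 1 * ‖v + t • x‖ := mul_le_mul_of_nonneg_right (hΦ1 f hfΦ) (norm_nonneg _)
      _ = ‖v + t • x‖ := one_mul _
  · intro w hw t
    obtain ⟨g, hgΨ, hgw⟩ := hΨ2 w hw
    have hgx : g (F.mkQ x) = 0 := by
      rw [hmkx, map_smul, hx₀Ψ g hgΨ, smul_zero]
    calc (1 - ε) * ‖w‖ ≤ ‖g w‖ := hgw
      _ = ‖g (w + t • F.mkQ x)‖ := by rw [map_add, map_smul, hgx, smul_zero, add_zero]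
      _ ≤ ‖g‖ * ‖w + t • F.mkQ x‖ := g.le_opNorm _
      _ ≤ 1 * ‖w + t • F.mkQ x‖ := mul_le_mul_of_nonneg_right (hΨ1 g hgΨ) (norm_nonneg _)
      _ = ‖w + t • F.mkQ x‖ := one_mul _

lemma exists_basic_seq (F : Submodule 𝕜 E) (hFc : IsClosed (F : Set E))
    (hq : ¬ Module.Finite 𝕜 (E ⧸ F)) :
    ∃ x : ℕ → E, (∀ n, ‖F.mkQ (x n)‖ = 1) ∧
      (∀ n, ∀ v ∈ Submodule.span 𝕜 (x '' Set.Iio n), ∀ t : 𝕜,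
        mazDelta n * ‖v‖ ≤ ‖v + t • x n‖) ∧
      (∀ n, ∀ w ∈ Submodule.span 𝕜 ((fun i => F.mkQ (x i)) '' Set.Iio n), ∀ t : 𝕜,
        mazDelta n * ‖w‖ ≤ ‖w + t • F.mkQ (x n)‖) := by
  have hε : ∀ n : ℕ, (0:ℝ) < 1 - mazDelta n := fun n => by linarith [mazDelta_lt_one n]
  have hfd1 : ∀ l : List E, FiniteDimensional 𝕜 (Submodule.span 𝕜 {v | v ∈ l}) := fun l =>
    FiniteDimensional.span_of_finite 𝕜 l.finite_toSet
  have hfd2 : ∀ l : List E, FiniteDimensional 𝕜 (Submodule.span 𝕜 (⇑F.mkQ '' {v | v ∈ l})) :=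
    fun l => FiniteDimensional.span_of_finite 𝕜 (l.finite_toSet.image _)
  set step : List E → E := fun l =>
    (mazur_step F hFc hq (Submodule.span 𝕜 {v | v ∈ l}) (hfd1 l)
      (Submodule.span 𝕜 (⇑F.mkQ '' {v | v ∈ l})) (hfd2 l) (hε l.length)).choose with hstep
  have hstepspec : ∀ l : List E, ‖F.mkQ (step l)‖ = 1 ∧
      (∀ v ∈ Submodule.span 𝕜 {v | v ∈ l}, ∀ t : 𝕜,
        (1 - (1 - mazDelta l.length)) * ‖v‖ ≤ ‖v + t • step l‖) ∧
      (∀ w ∈ Submodule.span 𝕜 (⇑F.mkQ '' {v | v ∈ l}), ∀ t : 𝕜,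
        (1 - (1 - mazDelta l.length)) * ‖w‖ ≤ ‖w + t • F.mkQ (step l)‖) := fun l =>
    (mazur_step F hFc hq (Submodule.span 𝕜 {v | v ∈ l}) (hfd1 l)
      (Submodule.span 𝕜 (⇑F.mkQ '' {v | v ∈ l})) (hfd2 l) (hε l.length)).choose_spec
  set Lst : ℕ → List E := fun n => Nat.rec [] (fun _ l => l ++ [step l]) n with hLdef
  set x : ℕ → E := fun n => step (Lst n) with hxdef
  have hLst : ∀ n, Lst n = (List.range n).map x := by
    intro n
    induction n with
    | zero => rfl
    | succ n ih =>
      show Lst n ++ [step (Lst n)] = _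
      rw [List.range_succ, List.map_append, ← ih]
      rfl
  have hlen : ∀ n, (Lst n).length = n := by
    intro n; rw [hLst n]; simp
  have hset : ∀ n, {v | v ∈ Lst n} = x '' Set.Iio n := by
    intro n
    ext v
    simp [hLst n, Set.mem_image, eq_comm]
  refine ⟨x, ?_, ?_, ?_⟩
  · intro n
    exact (hstepspec (Lst n)).1
  · intro n v hv t
    have := (hstepspec (Lst n)).2.1 v (by rwa [hset n])
    rw [hlen n, sub_sub_cancel] at this
    exact this t
  · intro n w hw t
    have := (hstepspec (Lst n)).2.2 w ?_
    · rw [hlen n, sub_sub_cancel] at this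
      exact this t
    · rw [hset n, Set.image_image]
      exact hw

lemma exists_basic_seq' (F : Submodule 𝕜 E) (hFc : IsClosed (F : Set E))
    (hq : ¬ Module.Finite 𝕜 (E ⧸ F)) :
    ∃ x : ℕ → E, (∀ n, ‖F.mkQ (x n)‖ = 1) ∧
      (∀ (a : ℕ → 𝕜) (m n : ℕ), m ≤ n →
        ‖∑ i ∈ Finset.range m, a i • x i‖ ≤ 2 * ‖∑ i ∈ Finset.range n, a i • x i‖) ∧
      (∀ (a : ℕ → 𝕜) (m n : ℕ), m ≤ n →
        ‖∑ i ∈ Finset.range m, a i • F.mkQ (x i)‖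
          ≤ 2 * ‖∑ i ∈ Finset.range n, a i • F.mkQ (x i)‖) := by
  obtain ⟨x, h1, h2, h3⟩ := exists_basic_seq F hFc hq
  exact ⟨x, h1, fun a m n h => basic_ineq x h2 a m n h,
    fun a m n h => basic_ineq (fun i => F.mkQ (x i)) h3 a m n h⟩

lemma two_to_three (F : Submodule 𝕜 E) (h2 : Spaceable 𝕜 ((F : Set E)ᶜ)) :
    ¬ Module.Finite 𝕜 (E ⧸ F) := by
  intro hfin
  obtain ⟨G, -, hGdim, hGsub⟩ := h2
  apply hGdim
  have hinj : Function.Injective ⇑(F.mkQ ∘ₗ G.subtype) := by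
    rw [← LinearMap.ker_eq_bot]
    rw [LinearMap.ker_eq_bot']
    intro a ha
    have h1 : (a : E) ∈ F := by
      simpa [Submodule.Quotient.mk_eq_zero] using ha
    have h2 := hGsub a.2
    rcases h2 with h | h
    · exact absurd h1 h
    · exact Subtype.ext h
  have : FiniteDimensional 𝕜 (E ⧸ F) := hfin
  exact FiniteDimensional.of_injective (F.mkQ ∘ₗ G.subtype) hinj

noncomputable def eVec (𝕜 : Type*) [RCLike 𝕜] (i : ℕ) : ellInfty 𝕜 := lp.single ⊤ i (1 : 𝕜)

lemma eVec_mem {S : Submodule 𝕜 (ellInfty 𝕜)} (hS : IsClosedSupsetC0 𝕜 S) (i : ℕ) :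
    eVec 𝕜 i ∈ S := by
  apply hS.2
  apply Tendsto.congr' (f₁ := fun _ => (0 : 𝕜))
  · filter_upwards [eventually_gt_atTop i] with n hn
    exact (lp.single_apply_ne (E := fun _ : ℕ => 𝕜) ⊤ i (1:𝕜) (by omega : n ≠ i)).symm
  · exact tendsto_const_nhds

lemma one_to_three (F : Submodule 𝕜 E)
    (h1 : ∃ S : Submodule 𝕜 (ellInfty 𝕜), IsClosedSupsetC0 𝕜 S ∧
      ∃ x : ℕ → E, SIndep 𝕜 S x ∧ SeqSLineable 𝕜 x S ((F : Set E)ᶜ)) :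
    ¬ Module.Finite 𝕜 (E ⧸ F) := by
  intro hfin
  obtain ⟨S, hS, x, hind, hlin⟩ := h1
  haveI : FiniteDimensional 𝕜 (E ⧸ F) := hfin
  set d := Module.finrank 𝕜 (E ⧸ F) with hd
  -- the family of quotient images
  have hnli : ¬ LinearIndependent 𝕜 (fun i : Fin (d+1) => F.mkQ (x i)) := by
    intro h
    have := h.fintype_card_le_finrank
    rw [Fintype.card_fin] at this
    omega
  obtain ⟨g, hgsum, i₀, hgi₀⟩ := Fintype.not_linearIndependent_iff.mp hnli
  -- the combination in ℓ∞
  set c : ellInfty 𝕜 := ∑ i : Fin (d+1), g i • eVec 𝕜 (i : ℕ) with hc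
  have hcS : c ∈ S := Submodule.sum_mem S fun i _ => Submodule.smul_mem S _ (eVec_mem hS _)
  have hcoord : ∀ n : ℕ, (c : ∀ _ : ℕ, 𝕜) n = ∑ i : Fin (d+1), (if n = (i:ℕ) then g i else 0) := by
    intro n
    rw [hc, lp.coeFn_sum]
    rw [Finset.sum_apply]
    congr 1
    ext i
    rw [lp.coeFn_smul, Pi.smul_apply]
    by_cases h : n = (i : ℕ)
    · simp [eVec, h, lp.single_apply_self]
    · simp [eVec, lp.single_apply_ne ⊤ _ _ h, h]
  -- the partial sums are eventually constant
  have hps : HasSeriesSum (fun n => (c : ∀ _ : ℕ, 𝕜) n • x n) (∑ i : Fin (d+1), g i • x (i:ℕ)) := by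
    unfold HasSeriesSum
    apply Tendsto.congr' (f₁ := fun _ => ∑ i : Fin (d+1), g i • x (i:ℕ))
    · filter_upwards [eventually_ge_atTop (d+1)] with N hN
      have : ∑ n ∈ Finset.range N, (c : ∀ _ : ℕ, 𝕜) n • x n
          = ∑ n ∈ Finset.range N, ∑ i : Fin (d+1), (if n = (i:ℕ) then g i • x n else 0) := by
        apply Finset.sum_congr rfl
        intro n _
        rw [hcoord n, Finset.sum_smul]
        congr 1; ext i
        by_cases h : n = (i:ℕ) <;> simp [h]
      rw [this, Finset.sum_comm]
      apply (Finset.sum_congr rfl ?_).symm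
      intro i _
      rw [Finset.sum_ite_eq' (Finset.range N) ((i:ℕ)) (fun n => g i • x n)]
      rw [if_pos (by simp only [Finset.mem_range]; omega)]
    · exact tendsto_const_nhds
  obtain ⟨s, hs, hmem⟩ := hlin c hcS
  have hseq : s = ∑ i : Fin (d+1), g i • x (i:ℕ) := tendsto_nhds_unique hs hps
  have hsF : s ∈ F := by
    rw [hseq]
    have : F.mkQ (∑ i : Fin (d+1), g i • x (i:ℕ)) = 0 := by
      rw [map_sum]
      simpa using hgsum
    rwa [F.mkQ_apply, Submodule.Quotient.mk_eq_zero] at this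
  have hs0 : s = 0 := by
    rcases hmem with h | h
    · exact absurd hsF h
    · exact h
  have hc0 : c = 0 := hind c hcS (hs0 ▸ hs)
  have hfin2 := hcoord i₀
  rw [hc0] at hfin2
  rw [Finset.sum_eq_single i₀] at hfin2
  · rw [if_pos rfl] at hfin2
    apply hgi₀
    rw [← hfin2]
    simp [lp.coeFn_zero]
  · intro b _ hb
    rw [if_neg (fun h => hb (Fin.val_injective h.symm))]
  · intro h; exact absurd (Finset.mem_univ i₀) h

lemma three_to_one (F : Submodule 𝕜 E) [CompleteSpace E] (hFc : IsClosed (F : Set E))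
    (hq : ¬ Module.Finite 𝕜 (E ⧸ F)) :
    ∃ S : Submodule 𝕜 (ellInfty 𝕜), IsClosedSupsetC0 𝕜 S ∧
      ∃ x : ℕ → E, SIndep 𝕜 S x ∧ SeqSLineable 𝕜 x S ((F : Set E)ᶜ) := by
  obtain ⟨x, hx1, hx2, hx3⟩ := exists_basic_seq' F hFc hq
  have hind0 : ∀ d : ℕ → 𝕜,
      Tendsto (fun N => ∑ i ∈ Finset.range N, d i • F.mkQ (x i)) atTop (nhds 0) →
      ∀ m, d m = 0 := fun d hd m => series_indep _ hx1 hx3 d hd m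
  set r : ℕ → ℝ := fun n => (1/2:ℝ)^n / (1 + ‖x n‖) with hr
  have hxnn : ∀ n, (0:ℝ) < 1 + ‖x n‖ := fun n => by positivity
  have hrpos : ∀ n, 0 < r n := fun n => div_pos (by positivity) (hxnn n)
  set x' : ℕ → E := fun n => ((r n : ℝ) : 𝕜) • x n with hx'
  have hx'norm : ∀ n, ‖x' n‖ ≤ (1/2:ℝ)^n := by
    intro n
    have h0 : ‖x' n‖ = r n * ‖x n‖ := by
      rw [hx', norm_smul, RCLike.norm_ofReal, abs_of_pos (hrpos n)]
    rw [h0, hr]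
    simp only []
    rw [div_mul_eq_mul_div, div_le_iff₀ (hxnn n)]
    have hp : (0:ℝ) ≤ (1/2:ℝ)^n := by positivity
    nlinarith [norm_nonneg (x n)]
  set Q : E →L[𝕜] (E ⧸ F) :=
    F.mkQ.mkContinuous 1 (fun v => by
      simpa using Submodule.Quotient.norm_mk_le F v) with hQ
  have hQapp : ∀ v, Q v = F.mkQ v := fun v => rfl
  have hconv : ∀ c : ellInfty 𝕜, Summable (fun n => (c : ∀ _ : ℕ, 𝕜) n • x' n) := by
    intro c
    apply Summable.of_norm
    apply Summable.of_nonneg_of_le (fun n => norm_nonneg _) (fun n => ?_)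
      ((summable_geometric_two).mul_left ‖c‖)
    rw [norm_smul]
    exact mul_le_mul (lp.norm_apply_le_norm ENNReal.top_ne_zero c n) (hx'norm n)
      (norm_nonneg _) (norm_nonneg _)
  have hkey : ∀ c : ellInfty 𝕜, ∀ s : E,
      HasSeriesSum (fun n => (c : ∀ _ : ℕ, 𝕜) n • x' n) s → s ∈ F → c = 0 := by
    intro c s hs hsF
    have hQs : Tendsto (fun N => Q (∑ i ∈ Finset.range N, (c : ∀ _ : ℕ, 𝕜) i • x' i))
        atTop (nhds (Q s)) := (Q.continuous.tendsto s).comp hs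
    have hQs0 : Q s = 0 := by
      rw [hQapp, F.mkQ_apply, Submodule.Quotient.mk_eq_zero]; exact hsF
    set d : ℕ → 𝕜 := fun n => (c : ∀ _ : ℕ, 𝕜) n * ((r n : ℝ) : 𝕜) with hd
    have heq : ∀ N, Q (∑ i ∈ Finset.range N, (c : ∀ _ : ℕ, 𝕜) i • x' i)
        = ∑ i ∈ Finset.range N, d i • F.mkQ (x i) := by
      intro N
      rw [map_sum]
      apply Finset.sum_congr rfl
      intro i _
      rw [hx']
      simp only []
      rw [map_smul, map_smul, hQapp, hd]
      rw [smul_smul]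
    have hQs' : Tendsto (fun N => ∑ i ∈ Finset.range N, d i • F.mkQ (x i)) atTop (nhds 0) := by
      rw [hQs0] at hQs
      exact hQs.congr heq
    have hd0 := hind0 d hQs'
    have hcoe : (c : ∀ _ : ℕ, 𝕜) = 0 := by
      funext n
      have := hd0 n
      rw [hd] at this
      simp only [] at this
      have hrne : ((r n : ℝ) : 𝕜) ≠ 0 := by
        simp only [ne_eq, RCLike.ofReal_eq_zero]
        exact ne_of_gt (hrpos n)
      have := mul_eq_zero.mp this
      rcases this with h | h
      · exact h
      · exact absurd h hrne
    exact lp.ext hcoe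
  refine ⟨⊤, ⟨by rw [Submodule.top_coe]; exact isClosed_univ, fun f _ => trivial⟩, x', ?_, ?_⟩
  · intro c _ h0
    exact hkey c 0 h0 (zero_mem F)
  · intro c _
    have hsum := hconv c
    refine ⟨∑' n, (c : ∀ _ : ℕ, 𝕜) n • x' n, hsum.hasSum.tendsto_sum_nat, ?_⟩
    by_cases hsF : (∑' n, (c : ∀ _ : ℕ, 𝕜) n • x' n) ∈ F
    · right
      have hc0 := hkey c _ hsum.hasSum.tendsto_sum_nat hsF
      have hz : ∀ N, ∑ i ∈ Finset.range N, (c : ∀ _ : ℕ, 𝕜) i • x' i = 0 := by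
        intro N
        apply Finset.sum_eq_zero
        intro i _
        rw [hc0]
        simp [lp.coeFn_zero]
      have h1 : HasSeriesSum (fun n => (c : ∀ _ : ℕ, 𝕜) n • x' n) 0 := by
        unfold HasSeriesSum
        apply Tendsto.congr (fun N => (hz N).symm)
        exact tendsto_const_nhds
      have := tendsto_nhds_unique hsum.hasSum.tendsto_sum_nat h1
      simp only [Set.mem_singleton_iff]
      exact this
    · left
      exact hsF

lemma three_to_two (F : Submodule 𝕜 E) (hFc : IsClosed (F : Set E))
    (hq : ¬ Module.Finite 𝕜 (E ⧸ F)) : Spaceable 𝕜 ((F : Set E)ᶜ) := by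
  obtain ⟨x, hx1, hx2, hx3⟩ := exists_basic_seq' F hFc hq
  have hQcb : ∀ (a : ℕ → 𝕜) (m n : ℕ), m < n →
      ‖a m‖ ≤ 4 * ‖∑ i ∈ Finset.range n, a i • F.mkQ (x i)‖ :=
    fun a m n h => coeff_bound _ hx1 hx3 a m n h
  set Q : E →L[𝕜] (E ⧸ F) :=
    F.mkQ.mkContinuous 1 (fun v => by
      simpa using Submodule.Quotient.norm_mk_le F v) with hQdef
  have hQapp : ∀ v, Q v = F.mkQ v := fun v => rfl
  set G0 : Submodule 𝕜 E := Submodule.span 𝕜 (Set.range x) with hG0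
  set G : Submodule 𝕜 E := G0.topologicalClosure with hG
  -- linear independence of x
  have hli : LinearIndependent 𝕜 x := by
    rw [linearIndependent_iff]
    intro l hl
    ext m
    set N : ℕ := max (l.support.sup id + 1) (m + 1) with hN
    have hsupp : l.support ⊆ Finset.range N := by
      intro i hi
      rw [Finset.mem_range]
      have h := Finset.le_sup (f := id) hi
      simp only [id_eq] at h
      omega
    have hrepr : ∑ i ∈ Finset.range N, l i • x i = 0 := by
      rw [← hl, Finsupp.linearCombination_apply, Finsupp.sum]
      apply (Finset.sum_subset hsupp ?_).symm
      intro i _ hi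
      rw [Finsupp.notMem_support_iff.mp hi, zero_smul]
    have hquot : ∑ i ∈ Finset.range N, l i • F.mkQ (x i) = 0 := by
      have := congrArg (fun v => Q v) hrepr
      simpa [map_sum, map_smul, hQapp] using this
    have hb := hQcb l m N (by omega)
    rw [hquot, norm_zero, mul_zero] at hb
    have := le_antisymm hb (norm_nonneg _)
    simpa using norm_eq_zero.mp this
  refine ⟨G, Submodule.isClosed_topologicalClosure G0, ?_, ?_⟩
  · -- infinite dimensional
    intro hfin
    have hxG : ∀ n, x n ∈ G := fun n =>
      G0.le_topologicalClosure (Submodule.subset_span ⟨n, rfl⟩)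
    have hli' : LinearIndependent 𝕜 (fun n => (⟨x n, hxG n⟩ : G)) := by
      apply LinearIndependent.of_comp G.subtype
      convert hli
      rfl
    exact Module.Finite.not_linearIndependent_of_infinite (fun n => (⟨x n, hxG n⟩ : G)) hli'
  · -- contained in Fᶜ ∪ {0}
    intro y hyG
    by_cases hyF : y ∈ F
    case neg => left; exact hyF
    right
    have hyc : y ∈ closure (G0 : Set E) := by
      rw [← Submodule.topologicalClosure_coe]; exact hyG
    obtain ⟨sq, hsqmem, hsqlim⟩ := mem_closure_iff_seq_limit.mp hyc
    have hrep : ∀ k, ∃ (N : ℕ) (a : ℕ → 𝕜), (∀ i, N ≤ i → a i = 0) ∧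
        sq k = ∑ i ∈ Finset.range N, a i • x i := by
      intro k
      have hmem : sq k ∈ Submodule.span 𝕜 (Set.range x) := hsqmem k
      obtain ⟨c, hc⟩ := Finsupp.mem_span_range_iff_exists_finsupp.mp hmem
      refine ⟨c.support.sup id + 1, ⇑c, ?_, ?_⟩
      · intro i hi
        by_contra hne
        have hmem2 : i ∈ c.support := Finsupp.mem_support_iff.mpr hne
        have h := Finset.le_sup (f := id) hmem2
        simp only [id_eq] at h
        omega
      · rw [← hc, Finsupp.sum]
        apply Finset.sum_subset ?_ ?_
        · intro i hi
          rw [Finset.mem_range]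
          have h := Finset.le_sup (f := id) hi
          simp only [id_eq] at h
          omega
        · intro i _ hi
          rw [Finsupp.notMem_support_iff.mp hi, zero_smul]
    choose Nf af haf0 hafs using hrep
    have hpad : ∀ k N', Nf k ≤ N' → ∑ i ∈ Finset.range N', af k i • x i = sq k := by
      intro k N' hN'
      rw [hafs k]
      apply (Finset.sum_subset (Finset.range_subset_range.mpr hN') ?_).symm
      intro i hi hni
      rw [Finset.mem_range] at hi hni
      rw [haf0 k i (by omega), zero_smul]
    have hQy : Q y = 0 := by
      rw [hQapp, F.mkQ_apply, Submodule.Quotient.mk_eq_zero]; exact hyF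
    have hQlim : Tendsto (fun k => Q (sq k)) atTop (nhds 0) := by
      rw [← hQy]
      exact (Q.continuous.tendsto y).comp hsqlim
    have hbound : ∀ ε : ℝ, 0 < ε → ‖y‖ ≤ 6 * ε := by
      intro ε hε
      obtain ⟨K₁, hK₁⟩ := Metric.tendsto_atTop.mp hsqlim ε hε
      set M : ℕ := Nf K₁ with hM
      set C : ℝ := ∑ i ∈ Finset.range M, ‖x i‖ with hC
      have hCnn : (0:ℝ) ≤ C := Finset.sum_nonneg fun i _ => norm_nonneg _
      have hεC : (0:ℝ) < ε / (4 * C + 1) := by positivity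
      obtain ⟨K₂, hK₂⟩ := Metric.tendsto_atTop.mp hQlim (ε / (4 * C + 1)) hεC
      set k : ℕ := max K₁ K₂ with hk
      set N : ℕ := max (Nf k) M with hNN
      set b : ℕ → 𝕜 := fun i => af k i - af K₁ i with hb
      have e1 : ∑ i ∈ Finset.range N, af k i • x i = sq k := hpad k N (le_max_left _ _)
      have e2 : ∑ i ∈ Finset.range N, af K₁ i • x i = sq K₁ := hpad K₁ N (le_trans (le_of_eq hM.symm) (le_max_right _ _))
      have e2' : ∑ i ∈ Finset.range M, af K₁ i • x i = sq K₁ := hpad K₁ M (le_of_eq hM.symm)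
      have e3 : ∑ i ∈ Finset.range N, b i • x i = sq k - sq K₁ := by
        rw [← e1, ← e2, ← Finset.sum_sub_distrib]
        apply Finset.sum_congr rfl
        intro i _
        rw [hb]; simp only []
        rw [sub_smul]
      have e4 : ∑ i ∈ Finset.range M, b i • x i
          = (∑ i ∈ Finset.range M, af k i • x i) - sq K₁ := by
        rw [← e2', ← Finset.sum_sub_distrib]
        apply Finset.sum_congr rfl
        intro i _
        rw [hb]; simp only []
        rw [sub_smul]
      -- distances
      have hd1 : ‖sq k - y‖ < ε := by
        rw [← dist_eq_norm]; exact hK₁ k (le_max_left _ _)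
      have hd2 : ‖sq K₁ - y‖ < ε := by
        rw [← dist_eq_norm]; exact hK₁ K₁ le_rfl
      have hdk : ‖sq k - sq K₁‖ ≤ 2 * ε := by
        have : sq k - sq K₁ = (sq k - y) - (sq K₁ - y) := by abel
        rw [this]
        calc ‖(sq k - y) - (sq K₁ - y)‖ ≤ ‖sq k - y‖ + ‖sq K₁ - y‖ := norm_sub_le _ _
          _ ≤ 2 * ε := by linarith
      -- tail estimate
      have t1 : ‖(∑ i ∈ Finset.range M, af k i • x i) - sq K₁‖ ≤ 4 * ε := by
        rw [← e4]
        calc ‖∑ i ∈ Finset.range M, b i • x i‖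
            ≤ 2 * ‖∑ i ∈ Finset.range N, b i • x i‖ := hx2 b M N (le_max_right _ _)
          _ = 2 * ‖sq k - sq K₁‖ := by rw [e3]
          _ ≤ 4 * ε := by linarith
      -- head estimate
      have hQsqk : ‖Q (sq k)‖ ≤ ε / (4 * C + 1) := by
        have := hK₂ k (le_max_right _ _)
        rw [dist_zero_right] at this
        exact le_of_lt this
      have hquot : Q (sq k) = ∑ i ∈ Finset.range N, af k i • F.mkQ (x i) := by
        rw [← e1, map_sum]
        apply Finset.sum_congr rfl
        intro i _
        rw [map_smul, hQapp]
      have hcoef : ∀ i, i < M → ‖af k i‖ ≤ 4 * ‖Q (sq k)‖ := by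
        intro i hi
        have := hQcb (af k) i N (lt_of_lt_of_le hi (le_max_right _ _))
        rw [← hquot] at this
        exact this
      have t2 : ‖∑ i ∈ Finset.range M, af k i • x i‖ ≤ 4 * ‖Q (sq k)‖ * C := by
        calc ‖∑ i ∈ Finset.range M, af k i • x i‖
            ≤ ∑ i ∈ Finset.range M, ‖af k i • x i‖ := norm_sum_le _ _
          _ ≤ ∑ i ∈ Finset.range M, (4 * ‖Q (sq k)‖) * ‖x i‖ := by
              apply Finset.sum_le_sum
              intro i hi
              rw [norm_smul]
              exact mul_le_mul_of_nonneg_right (hcoef i (Finset.mem_range.mp hi)) (norm_nonneg _)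
          _ = 4 * ‖Q (sq k)‖ * C := by rw [hC, Finset.mul_sum]
      have t2' : ‖∑ i ∈ Finset.range M, af k i • x i‖ ≤ ε := by
        have h4 : 4 * ‖Q (sq k)‖ * C ≤ 4 * (ε / (4 * C + 1)) * C := by
          apply mul_le_mul_of_nonneg_right _ hCnn
          apply mul_le_mul_of_nonneg_left hQsqk (by norm_num)
        have hD : (0:ℝ) < 4 * C + 1 := by positivity
        have h5 : 4 * (ε / (4 * C + 1)) * C ≤ ε := by
          calc 4 * (ε / (4 * C + 1)) * C = (4 * C / (4 * C + 1)) * ε := by ring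
            _ ≤ 1 * ε := by
                apply mul_le_mul_of_nonneg_right _ hε.le
                rw [div_le_one hD]; linarith
            _ = ε := one_mul ε
        linarith [t2]
      -- combine
      calc ‖y‖ = ‖(y - sq K₁) + (sq K₁ - ∑ i ∈ Finset.range M, af k i • x i)
          + ∑ i ∈ Finset.range M, af k i • x i‖ := by congr 1; abel
        _ ≤ ‖y - sq K₁‖ + ‖sq K₁ - ∑ i ∈ Finset.range M, af k i • x i‖
            + ‖∑ i ∈ Finset.range M, af k i • x i‖ := norm_add₃_le
        _ ≤ ε + 4 * ε + ε := by
            have h1 : ‖y - sq K₁‖ < ε := by rw [norm_sub_rev]; exact hd2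
            have h2 : ‖sq K₁ - ∑ i ∈ Finset.range M, af k i • x i‖ ≤ 4 * ε := by
              rw [norm_sub_rev]; exact t1
            linarith
        _ = 6 * ε := by ring
    have hy0 : ‖y‖ ≤ 0 := by
      by_contra hpos
      push_neg at hpos
      have := hbound (‖y‖ / 7) (by linarith)
      linarith
    have : y = 0 := norm_le_zero_iff.mp hy0
    simpa using this

end Main

/-- For a Banach space `E` and an infinite-dimensional closed subspace `F`, the following
are equivalent: (1) `E \ F` is `[(xₙ)ₙ, 𝒮]`-lineable for some closed subspace `𝒮` of `ℓ∞`
containing `c₀` and some `𝒮`-independent sequence `(xₙ)ₙ`; (2) `E \ F` is spaceable;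
(3) `F` has infinite codimension in `E`. -/
theorem banach_complement_tfae
    {𝕜 : Type*} [RCLike 𝕜] {E : Type*} [NormedAddCommGroup E] [NormedSpace 𝕜 E]
    [CompleteSpace E] (F : Submodule 𝕜 E)
    (hFclosed : IsClosed (F : Set E)) (hFdim : ¬ Module.Finite 𝕜 F) :
    List.TFAE
      [ ∃ S : Submodule 𝕜 (ellInfty 𝕜), IsClosedSupsetC0 𝕜 S ∧
          ∃ x : ℕ → E, SIndep 𝕜 S x ∧ SeqSLineable 𝕜 x S ((F : Set E)ᶜ),
        Spaceable 𝕜 ((F : Set E)ᶜ),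
        ¬ Module.Finite 𝕜 (E ⧸ F) ] := by
  tfae_have 1 → 3
  · exact fun h => one_to_three F h
  tfae_have 2 → 3
  · exact fun h => two_to_three F h
  tfae_have 3 → 1
  · exact fun h => three_to_one F hFclosed h
  tfae_have 3 → 2
  · exact fun h => three_to_two F hFclosed h
  tfae_finish
end

section
/- Let E be an F-space (a complete metrizable topological vector space over 𝕂 = ℝ or ℂ), let Z be a closed linear subspace of E (which is then itself an F-space), let ℐ : Z → E be the identity embedding, and let K : Z → E be a compact continuous linear operator. Then the operator ℐ + K : Z → E has closed range. -/
open Filter Topology Pointwise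

private theorem limit_in_range
    {𝕜 : Type*} [RCLike 𝕜] {E : Type*} [AddCommGroup E] [Module 𝕜 E]
    [UniformSpace E] [IsUniformAddGroup E] [ContinuousSMul 𝕜 E]
    [TopologicalSpace.MetrizableSpace E]
    (Z : Submodule 𝕜 E) (hZclosed : IsClosed (Z : Set E))
    (K : Z →ₗ[𝕜] E) (hKcont : Continuous K)
    (C : Set E) (hC : IsCompact C) (u : ℕ → Z) (hu : ∀ n, K (u n) ∈ C)
    (y : E) (hy : Tendsto (fun n => (u n : E) + K (u n)) atTop (𝓝 y)) :
    y ∈ Set.range fun z : Z => (z : E) + K z := by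
  obtain ⟨x, -, φ, hφ, hφx⟩ := hC.isSeqCompact hu
  have h1 : Tendsto (fun k => ((u (φ k) : E))) atTop (𝓝 (y - x)) := by
    have := (hy.comp hφ.tendsto_atTop).sub hφx
    simpa using this
  have hyx : y - x ∈ Z := hZclosed.mem_of_tendsto h1
    (Filter.Eventually.of_forall fun k => (u (φ k)).2)
  refine ⟨⟨y - x, hyx⟩, ?_⟩
  have h2 : Tendsto (fun k => u (φ k)) atTop (𝓝 ⟨y - x, hyx⟩) :=
    tendsto_subtype_rng.2 h1
  have h3 : Tendsto (fun k => K (u (φ k))) atTop (𝓝 (K ⟨y - x, hyx⟩)) :=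
    (hKcont.tendsto _).comp h2
  have hx : K ⟨y - x, hyx⟩ = x := tendsto_nhds_unique h3 hφx
  show (y - x) + K ⟨y - x, hyx⟩ = y
  rw [hx]
  abel

/-- **Kalton's lemma.** For an `F`-space `E` and a closed subspace `Z` of `E` (itself an
`F`-space), if `K : Z → E` is a compact continuous linear operator and `ℐ : Z → E` is the
identity embedding, then `ℐ + K` has closed range. -/
theorem identity_add_compact_closed_range
    {𝕜 : Type*} [RCLike 𝕜] {E : Type*} [AddCommGroup E] [Module 𝕜 E]
    [UniformSpace E] [IsUniformAddGroup E] [ContinuousSMul 𝕜 E] [CompleteSpace E]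
    [TopologicalSpace.MetrizableSpace E]
    (Z : Submodule 𝕜 E) (hZclosed : IsClosed (Z : Set E))
    (K : Z →ₗ[𝕜] E) (hKcont : Continuous K) (hKcompact : IsCompactOperator K) :
    IsClosed (Set.range fun z : Z => (z : E) + K z) := by
  obtain ⟨C, hC, hCmem⟩ := hKcompact
  obtain ⟨U, ⟨hU𝓝, hUbal⟩, hUsub⟩ := (nhds_basis_balanced 𝕜 ↥Z).mem_iff.mp hCmem
  apply IsSeqClosed.isClosed
  intro f y hf hfy
  choose z hz using hf
  replace hz : ∀ n, ((z n : E)) + K (z n) = f n := hz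
  set N : Submodule 𝕜 ↥Z := LinearMap.ker (Z.subtype + K) with hN
  have hmemN : ∀ w : ↥Z, w ∈ N ↔ (w : E) + K w = 0 := by
    intro w
    simp [hN, LinearMap.mem_ker]
  have hfy' : Tendsto (fun n => ((z n : E) + K (z n))) atTop (𝓝 y) :=
    hfy.congr fun n => (hz n).symm
  have hdiff : ∀ (a b : ↥Z), ((a - b : ↥Z) : E) + K (a - b)
      = ((a : E) + K a) - ((b : E) + K b) := by
    intro a b
    rw [map_sub]
    push_cast
    abel
  by_cases h : ∃ c : ℝ, 0 < c ∧ ∃ᶠ n in atTop, ∃ w ∈ N, z n - w ∈ ((c : 𝕜) • U : Set Z)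
  · obtain ⟨c, hc, hfreq⟩ := h
    obtain ⟨φ, hφ, hP⟩ := Filter.extraction_of_frequently_atTop hfreq
    choose w hwN hwU using hP
    refine limit_in_range Z hZclosed K hKcont ((c : 𝕜) • C) (hC.smul _)
      (fun k => z (φ k) - w k) (fun k => ?_) y ?_
    · obtain ⟨u, huU, hu⟩ := hwU k
      have hu' : (c : 𝕜) • u = z (φ k) - w k := hu
      show K (z (φ k) - w k) ∈ _
      rw [← hu', map_smul]
      exact Set.smul_mem_smul_set (hUsub huU)
    · have heq : ∀ k, ((z (φ k) - w k : ↥Z) : E) + K (z (φ k) - w k) = f (φ k) := by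
        intro k
        rw [hdiff, (hmemN (w k)).1 (hwN k), hz (φ k), sub_zero]
      exact (hfy.comp hφ.tendsto_atTop).congr fun k => (heq k).symm
  · push_neg at h
    exfalso
    set A : ℕ → Set ℝ := fun n => {c : ℝ | 0 < c ∧ ∃ w ∈ N, z n - w ∈ ((c : 𝕜) • U : Set Z)} with hA
    have hAne : ∀ n, (A n).Nonempty := by
      intro n
      obtain ⟨r, hr⟩ := absorbs_iff_norm.1 (absorbent_nhds_zero (𝕜 := 𝕜) hU𝓝 (z n))
      refine ⟨max r 1, lt_of_lt_of_le one_pos (le_max_right _ _), 0, N.zero_mem, ?_⟩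
      rw [sub_zero]
      exact hr ((max r 1 : ℝ) : 𝕜)
        (by rw [RCLike.norm_ofReal, abs_of_pos (lt_of_lt_of_le one_pos (le_max_right _ _))]
            exact le_max_left _ _) rfl
    have hbdd : ∀ n, BddBelow (A n) := fun n => ⟨0, fun c hc => le_of_lt hc.1⟩
    have hup : ∀ n, ∀ c ∈ A n, ∀ c', c ≤ c' → c' ∈ A n := by
      rintro n c ⟨hc, w, hwN, u, huU, hu⟩ c' hcc'
      have hc' : (0:ℝ) < c' := lt_of_lt_of_le hc hcc'
      have hu' : ((c : ℝ) : 𝕜) • u = z n - w := hu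
      refine ⟨hc', w, hwN, ((c / c' : ℝ) : 𝕜) • u, ?_, ?_⟩
      · refine hUbal.smul_mem ?_ huU
        rw [RCLike.norm_ofReal, abs_of_pos (by positivity)]
        exact (div_le_one hc').2 hcc'
      · show ((c' : ℝ) : 𝕜) • (((c / c' : ℝ) : 𝕜) • u) = z n - w
        have hcc : (c' : ℝ) * (c / c') = c := by field_simp
        rw [smul_smul, ← RCLike.ofReal_mul, hcc, hu']
    set t : ℕ → ℝ := fun n => sInf (A n) with htdef
    have ht_top : Tendsto t atTop atTop := by
      rw [tendsto_atTop]
      intro M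
      have hev := h (max M 0 + 1) (by positivity)
      filter_upwards [hev] with n hn
      by_contra hlt
      push_neg at hlt
      have hmem : (max M 0 + 1) ∈ A n := by
        obtain ⟨cc, hccA, hcclt⟩ := exists_lt_of_csInf_lt (hAne n)
          (show sInf (A n) < max M 0 + 1 from
            lt_of_lt_of_le hlt (by
              have : M ≤ max M 0 := le_max_left _ _
              linarith))
        exact hup n cc hccA _ hcclt.le
      obtain ⟨w, hwN, hw⟩ := hmem.2
      exact hn w hwN hw
    have hcex : ∀ n, ∃ cc ∈ A n, cc < t n + 1 := fun n =>
      exists_lt_of_csInf_lt (hAne n) (lt_add_one _)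
    choose c hcA hclt using hcex
    have hct : ∀ n, t n ≤ c n := fun n => csInf_le (hbdd n) (hcA n)
    have hc0 : ∀ n, 0 < c n := fun n => (hcA n).1
    have hdecomp : ∀ n, ∃ w ∈ N, ∃ u ∈ U, ((c n : ℝ) : 𝕜) • u = z n - w := by
      intro n
      obtain ⟨-, w, hwN, u, huU, hu⟩ := hcA n
      exact ⟨w, hwN, u, huU, hu⟩
    choose w hwN u huU hcu using hdecomp
    have hctop : Tendsto c atTop atTop := tendsto_atTop_mono hct ht_top
    have hinv : Tendsto (fun n => (((c n : ℝ) : 𝕜))⁻¹) atTop (𝓝 0) := by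
      rw [tendsto_zero_iff_norm_tendsto_zero]
      have h2 : Tendsto (fun n => (c n)⁻¹) atTop (𝓝 0) :=
        tendsto_inv_atTop_zero.comp hctop
      refine h2.congr fun n => ?_
      rw [norm_inv, RCLike.norm_ofReal, abs_of_pos (hc0 n)]
    have hSu : ∀ n, (u n : E) + K (u n) = (((c n : ℝ) : 𝕜))⁻¹ • f n := by
      intro n
      have hne : ((c n : ℝ) : 𝕜) ≠ 0 := by
        simpa using ne_of_gt (hc0 n)
      have h1 : ((c n : ℝ) : 𝕜) • ((u n : E) + K (u n)) = f n := by
        rw [smul_add]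
        have hK : ((c n : ℝ) : 𝕜) • K (u n) = K (((c n : ℝ) : 𝕜) • u n) := (map_smul K _ _).symm
        have hcoe : ((c n : ℝ) : 𝕜) • ((u n : E)) = ((((c n : ℝ) : 𝕜) • u n : ↥Z) : E) := rfl
        rw [hK, hcoe, hcu n, hdiff, (hmemN (w n)).1 (hwN n), hz n, sub_zero]
      rw [← h1, inv_smul_smul₀ hne]
    have hSu0 : Tendsto (fun n => (u n : E) + K (u n)) atTop (𝓝 0) := by
      have := hinv.smul hfy
      rw [zero_smul] at this
      exact this.congr fun n => (hSu n).symm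
    obtain ⟨x, -, φ, hφ, hφx⟩ := hC.isSeqCompact (fun n => hUsub (huU n))
    have h1 : Tendsto (fun k => ((u (φ k) : E))) atTop (𝓝 (-x)) := by
      have := (hSu0.comp hφ.tendsto_atTop).sub hφx
      simpa using this
    have hxZ : -x ∈ Z := hZclosed.mem_of_tendsto h1
      (Filter.Eventually.of_forall fun k => (u (φ k)).2)
    set zl : ↥Z := ⟨-x, hxZ⟩ with hzl
    have h2 : Tendsto (fun k => u (φ k)) atTop (𝓝 zl) := tendsto_subtype_rng.2 h1
    have h3 : Tendsto (fun k => K (u (φ k))) atTop (𝓝 (K zl)) := (hKcont.tendsto _).comp h2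
    have hKzl : K zl = x := tendsto_nhds_unique h3 hφx
    have hzlN : zl ∈ N := by
      rw [hmemN, hKzl]
      show -x + x = 0
      abel
    have h4 : Tendsto (fun k => u (φ k) - zl) atTop (𝓝 0) := by
      have := h2.sub (tendsto_const_nhds (x := zl))
      rwa [sub_self] at this
    have hhalf : (((1 / 2 : ℝ) : 𝕜) • U : Set ↥Z) ∈ 𝓝 (0 : ↥Z) := by
      rw [set_smul_mem_nhds_zero_iff (by norm_num)]
      exact hU𝓝
    have hev := h4.eventually_mem hhalf
    have hev2 := (ht_top.comp hφ.tendsto_atTop).eventually_ge_atTop 2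
    obtain ⟨k, hk1, hk2⟩ := (hev.and hev2).exists
    have key : c (φ k) / 2 ∈ A (φ k) := by
      refine ⟨by have := hc0 (φ k); positivity, w (φ k) + ((c (φ k) : ℝ) : 𝕜) • zl,
        N.add_mem (hwN _) (N.smul_mem _ hzlN), ?_⟩
      obtain ⟨v, hvU, hv⟩ := hk1
      have hv' : ((1 / 2 : ℝ) : 𝕜) • v = u (φ k) - zl := hv
      refine ⟨v, hvU, ?_⟩
      show ((c (φ k) / 2 : ℝ) : 𝕜) • v = z (φ k) - (w (φ k) + ((c (φ k) : ℝ) : 𝕜) • zl)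
      have hz1 : z (φ k) - (w (φ k) + ((c (φ k) : ℝ) : 𝕜) • zl)
          = ((c (φ k) : ℝ) : 𝕜) • (u (φ k) - zl) := by
        rw [smul_sub, hcu (φ k)]
        abel
      rw [hz1, ← hv', smul_smul, ← RCLike.ofReal_mul]
      congr 2
      ring
    have hle : t (φ k) ≤ c (φ k) / 2 := csInf_le (hbdd _) key
    have := hclt (φ k)
    have := hct (φ k)
    simp only [Function.comp] at hk2
    linarith
end

section
/- Let E be an F-space (a complete metrizable topological vector space over 𝕂 = ℝ or ℂ), let 𝒮 be a closed linear subspace of ℓ∞, and let (xₙ)ₙ be a sequence in E such that for every (tₙ)ₙ ∈ 𝒮 the series Σₙ tₙ xₙ converges in E. Then the linear operator 𝒪 : 𝒮 → E defined by 𝒪((tₙ)ₙ) = Σₙ tₙ xₙ is continuous. -/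
open Filter Topology
open Set Bornology Pointwise

set_option maxHeartbeats 1000000
set_option synthInstance.maxHeartbeats 400000

/-- Banach–Steinhaus for a pointwise convergent sequence of continuous linear maps from a
Baire normed space into an arbitrary TVS: the family is equicontinuous at `0`. -/
theorem my_equicontinuousAt_zero
    {𝕜 G E : Type*} [RCLike 𝕜]
    [NormedAddCommGroup G] [NormedSpace 𝕜 G] [BaireSpace G]
    [AddCommGroup E] [Module 𝕜 E] [UniformSpace E] [IsUniformAddGroup E] [ContinuousSMul 𝕜 E]
    (T : ℕ → G →ₗ[𝕜] E) (hTc : ∀ N, Continuous (T N))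
    (hlim : ∀ t, ∃ s, Tendsto (fun N => T N t) atTop (𝓝 s)) :
    EquicontinuousAt (fun N => (T N : G → E)) 0 := by
  intro U hU
  rw [uniformity_eq_comap_nhds_zero] at hU
  obtain ⟨W, hW, hWU⟩ := Filter.mem_comap.mp hU
  obtain ⟨D, hD, hDW⟩ := exists_nhds_zero_half hW
  obtain ⟨C, ⟨hC, hCcl, hCbal⟩, hCD⟩ := (nhds_basis_closed_balanced 𝕜 E).mem_iff.mp hD
  set B : Set G := ⋂ N, T N ⁻¹' C with hB
  have hBcl : IsClosed B := isClosed_iInter fun N => hCcl.preimage (hTc N)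
  have hBmem : ∀ {t : G}, t ∈ B ↔ ∀ N, T N t ∈ C := by
    intro t; simp [hB]
  -- the closed sets `(m+1) • B` cover `G`
  have hcover : (⋃ m : ℕ, (((m + 1 : ℕ) : 𝕜) • B)) = univ := by
    refine eq_univ_of_forall fun t => ?_
    obtain ⟨s, hs⟩ := hlim t
    have hbdd : IsVonNBounded 𝕜 (range fun N => T N t) := hs.isVonNBounded_range 𝕜
    obtain ⟨r, hr0, hrc⟩ := (hbdd hC).exists_pos
    obtain ⟨m, hm⟩ := exists_nat_ge r
    have hc : ((m + 1 : ℕ) : 𝕜) ≠ 0 := by exact_mod_cast Nat.succ_ne_zero m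
    have hnorm : r ≤ ‖((m + 1 : ℕ) : 𝕜)‖ := by
      rw [RCLike.norm_natCast]
      exact hm.trans (by exact_mod_cast Nat.le_succ m)
    have hsub := hrc _ hnorm
    refine mem_iUnion.mpr ⟨m, ?_⟩
    rw [mem_smul_set_iff_inv_smul_mem₀ hc, hBmem]
    intro N
    have : T N t ∈ ((m + 1 : ℕ) : 𝕜) • C := hsub ⟨N, rfl⟩
    rw [mem_smul_set_iff_inv_smul_mem₀ hc] at this
    simpa [map_smul] using this
  obtain ⟨m, t₀, ht₀⟩ := nonempty_interior_of_iUnion_of_closed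
    (fun m : ℕ => (hBcl.smul_of_ne_zero (c := ((m + 1 : ℕ) : 𝕜))
      (by exact_mod_cast Nat.succ_ne_zero m))) hcover
  set a : 𝕜 := ((m + 1 : ℕ) : 𝕜) with ha
  have ha0 : a ≠ 0 := by rw [ha]; exact_mod_cast Nat.succ_ne_zero m
  set V : Set G := (fun v => t₀ + a • v) ⁻¹' interior (a • B) with hV
  have hVopen : IsOpen V := isOpen_interior.preimage (by fun_prop)
  have h0V : (0 : G) ∈ V := by simpa [hV] using ht₀
  refine mem_of_superset (hVopen.mem_nhds h0V) fun v hv => ?_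
  intro N
  apply hWU
  show T N v - T N 0 ∈ W
  rw [map_zero, sub_zero]
  -- main estimate
  have h1 : t₀ + a • v ∈ a • B := interior_subset hv
  have h2 : t₀ ∈ a • B := interior_subset ht₀
  obtain ⟨b₁, hb₁, hab₁⟩ := h1
  obtain ⟨b₂, hb₂, hab₂⟩ := h2
  have hveq : v = b₁ - b₂ := by
    have : a • (b₁ - b₂) = a • v := by
      simp only [] at hab₁ hab₂
      rw [smul_sub, hab₁, hab₂]; abel
    have := smul_right_injective G ha0 this
    exact this.symm
  have hc₁ : T N b₁ ∈ C := hBmem.mp hb₁ N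
  have hc₂ : -(T N b₂) ∈ C := by
    rw [hCbal.neg_mem_iff]; exact hBmem.mp hb₂ N
  have : T N v = T N b₁ + -(T N b₂) := by rw [hveq, map_sub, sub_eq_add_neg]
  rw [this]
  exact hDW _ (hCD hc₁) _ (hCD hc₂)

/-- For an `F`-space `E`, a closed subspace `𝒮` of `ℓ∞`, and a sequence `(xₙ)ₙ` in `E` such
that `∑ₙ tₙ xₙ` converges for every `(tₙ)ₙ ∈ 𝒮`, the linear operator
`𝒪 : 𝒮 → E`, `𝒪((tₙ)ₙ) = ∑ₙ tₙ xₙ`, is continuous. -/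
theorem summation_operator_continuous
    {𝕜 : Type*} [RCLike 𝕜] {E : Type*} [AddCommGroup E] [Module 𝕜 E]
    [UniformSpace E] [IsUniformAddGroup E] [ContinuousSMul 𝕜 E] [CompleteSpace E]
    [TopologicalSpace.MetrizableSpace E]
    (S : Submodule 𝕜 (ellInfty 𝕜)) (hSclosed : IsClosed (S : Set (ellInfty 𝕜)))
    (x : ℕ → E)
    (hconv : ∀ t : ellInfty 𝕜, t ∈ S →
      ∃ s : E, HasSeriesSum (fun n => (t : ∀ _ : ℕ, 𝕜) n • x n) s) :
    ∃ O : S →ₗ[𝕜] E, Continuous O ∧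
      ∀ t : S, HasSeriesSum (fun n => ((t : ellInfty 𝕜) : ∀ _ : ℕ, 𝕜) n • x n) (O t) := by

  haveI : CompleteSpace S := hSclosed.completeSpace_coe
  haveI : BaireSpace S := BaireSpace.of_completelyPseudoMetrizable
  -- evaluation maps are continuous on `ℓ∞`
  have heval : ∀ n : ℕ, Continuous fun f : ellInfty 𝕜 => (f : ∀ _ : ℕ, 𝕜) n := fun n => by
    refine (LipschitzWith.of_dist_le_mul (K := 1) fun f g => ?_).continuous
    have h := lp.norm_apply_le_norm (E := fun _ : ℕ => 𝕜) ENNReal.top_ne_zero (f - g) n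
    rw [lp.coeFn_sub, Pi.sub_apply] at h
    rw [NNReal.coe_one, one_mul, dist_eq_norm, dist_eq_norm]
    exact h
  -- the partial-sum operators
  let T : ℕ → S →ₗ[𝕜] E := fun N =>
    { toFun := fun t => ∑ n ∈ Finset.range N, ((t : ellInfty 𝕜) : ∀ _ : ℕ, 𝕜) n • x n
      map_add' := fun a b => by
        simp [Submodule.coe_add, lp.coeFn_add, add_smul, Finset.sum_add_distrib]
      map_smul' := fun c a => by
        simp [Submodule.coe_smul, lp.coeFn_smul, mul_smul, Finset.smul_sum] }
  have hTc : ∀ N, Continuous (T N) := fun N => by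
    have key : Continuous fun t : S =>
        ∑ n ∈ Finset.range N, ((t : ellInfty 𝕜) : ∀ _ : ℕ, 𝕜) n • x n :=
      continuous_finset_sum _ fun n _ =>
        (((heval n).comp continuous_subtype_val).smul continuous_const)
    exact key
  have hlim : ∀ t : S, ∃ s, Filter.Tendsto (fun N => T N t) Filter.atTop (𝓝 s) :=
    fun t => hconv t t.2
  choose f hf using hlim
  have hEq : EquicontinuousAt (fun N => (T N : S → E)) 0 :=
    my_equicontinuousAt_zero T hTc fun t => ⟨f t, hf t⟩
  have hEquicont : Equicontinuous (fun N => (T N : S → E)) :=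
    equicontinuous_of_equicontinuousAt_zero T hEq
  have hcont : Continuous f :=
    (tendsto_pi_nhds.mpr hf).continuous_of_equicontinuous hEquicont
  refine ⟨{ toFun := f
            map_add' := fun a b => tendsto_nhds_unique (hf (a + b))
              (by simpa [map_add] using (hf a).add (hf b))
            map_smul' := fun c a => tendsto_nhds_unique (hf (c • a))
              (by simpa [map_smul] using (hf a).const_smul c) }, hcont, fun t => hf t⟩
end

section
/- Let E be a Banach space and F an infinite-dimensional closed linear subspace of E. Then there exists a sequence (xₙ)ₙ of elements of F with Σₙ ‖xₙ‖ < ∞ that is ℓ∞-independent, i.e., for every bounded scalar sequence (tₙ)ₙ, the series Σₙ tₙ xₙ converges in F and Σₙ tₙ xₙ = 0 implies tₙ = 0 for all n; consequently the linear operator 𝒜 : ℓ∞ → F given by 𝒜((tₙ)ₙ) = Σₙ tₙ xₙ is well-defined and injective. -/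
open Filter Topology

section
variable (𝕜 : Type*) [RCLike 𝕜] (V : Type*) [NormedAddCommGroup V] [NormedSpace 𝕜 V]

lemma exists_riesz_unit (h : ¬ Module.Finite 𝕜 V) (s : Set V) (hs : s.Finite) :
    ∃ v : V, ‖v‖ = 1 ∧ ∀ y ∈ Submodule.span 𝕜 s, (1/2 : ℝ) ≤ ‖v - y‖ := by
  have hfd : FiniteDimensional 𝕜 (Submodule.span 𝕜 s) :=
    FiniteDimensional.span_of_finite 𝕜 hs
  have hclosed : IsClosed ((Submodule.span 𝕜 s : Submodule 𝕜 V) : Set V) :=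
    Submodule.closed_of_finiteDimensional _
  have hne : ∃ x : V, x ∉ Submodule.span 𝕜 s := by
    by_contra h'
    push_neg at h'
    have htop : Submodule.span 𝕜 s = ⊤ := Submodule.eq_top_iff'.mpr h'
    exact h (Module.Finite.equiv (LinearEquiv.ofTop _ htop))
  obtain ⟨x₀, hx₀, hdist⟩ := riesz_lemma hclosed hne (show (1:ℝ)/2 < 1 by norm_num)
  have hx₀0 : x₀ ≠ 0 := fun h0 => hx₀ (h0 ▸ Submodule.zero_mem _)
  have hn0 : (0:ℝ) < ‖x₀‖ := norm_pos_iff.mpr hx₀0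
  refine ⟨((‖x₀‖ : 𝕜))⁻¹ • x₀, ?_, ?_⟩
  · rw [norm_smul, norm_inv, RCLike.norm_ofReal, abs_of_pos hn0, inv_mul_cancel₀ hn0.ne']
  · intro y hy
    have hyF : ((‖x₀‖ : 𝕜)) • y ∈ Submodule.span 𝕜 s := Submodule.smul_mem _ _ hy
    have hrw : ((‖x₀‖ : 𝕜))⁻¹ • x₀ - y = ((‖x₀‖ : 𝕜))⁻¹ • (x₀ - (‖x₀‖ : 𝕜) • y) := by
      rw [smul_sub, smul_smul, inv_mul_cancel₀ (by exact_mod_cast hn0.ne'), one_smul]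
    rw [hrw, norm_smul, norm_inv, RCLike.norm_ofReal, abs_of_pos hn0]
    calc (1/2 : ℝ) = ‖x₀‖⁻¹ * ((1/2) * ‖x₀‖) := by field_simp
    _ ≤ ‖x₀‖⁻¹ * ‖x₀ - (‖x₀‖ : 𝕜) • y‖ := by
        apply mul_le_mul_of_nonneg_left (hdist _ hyF) (by positivity)

noncomputable def rieszSeq (h : ¬ Module.Finite 𝕜 V) : ℕ → V
  | n => (exists_riesz_unit 𝕜 V h (Set.range fun k : Fin n => rieszSeq h k)
      (Set.finite_range _)).choose
  termination_by n => n
  decreasing_by all_goals exact k.isLt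

lemma rieszSeq_spec (h : ¬ Module.Finite 𝕜 V) (n : ℕ) :
    ‖rieszSeq 𝕜 V h n‖ = 1 ∧
      ∀ y ∈ Submodule.span 𝕜 (Set.range fun k : Fin n => rieszSeq 𝕜 V h k),
        (1/2 : ℝ) ≤ ‖rieszSeq 𝕜 V h n - y‖ := by
  rw [rieszSeq]
  exact (exists_riesz_unit 𝕜 V h _ (Set.finite_range _)).choose_spec

end

set_option maxHeartbeats 1000000 in
/-- In any infinite-dimensional closed subspace `F` of a Banach space `E` there is a
sequence `(xₙ)ₙ` with `∑ₙ ‖xₙ‖ < ∞` that is `ℓ∞`-independent: for every bounded scalar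
sequence `(tₙ)ₙ` the series `∑ₙ tₙ xₙ` converges to an element of `F`, and it converges to
`0` only if all `tₙ = 0`; consequently the linear operator `𝒜 : ℓ∞ → F`,
`𝒜((tₙ)ₙ) = ∑ₙ tₙ xₙ`, is well-defined and injective. -/
theorem exists_ellInfty_independent_sequence
    {𝕜 : Type*} [RCLike 𝕜] {E : Type*} [NormedAddCommGroup E] [NormedSpace 𝕜 E]
    [CompleteSpace E] (F : Submodule 𝕜 E)
    (hFclosed : IsClosed (F : Set E)) (hFdim : ¬ Module.Finite 𝕜 F) :
    ∃ x : ℕ → E, (∀ n, x n ∈ F) ∧ Summable (fun n => ‖x n‖) ∧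
      (∀ t : ℕ → 𝕜, (∃ C : ℝ, ∀ n, ‖t n‖ ≤ C) →
        (∃ s ∈ F, HasSeriesSum (fun n => t n • x n) s) ∧
          (HasSeriesSum (fun n => t n • x n) (0 : E) → t = 0)) ∧
      ∃ A : ellInfty 𝕜 →ₗ[𝕜] F, Function.Injective A ∧
        ∀ t : ellInfty 𝕜, HasSeriesSum (fun n => (t : ∀ _ : ℕ, 𝕜) n • x n) ((A t : F) : E) := by
  haveI : CompleteSpace F := hFclosed.completeSpace_coe
  set e : ℕ → ↥F := rieszSeq 𝕜 ↥F hFdim with he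
  have he1 : ∀ n, ‖e n‖ = 1 := fun n => (rieszSeq_spec 𝕜 ↥F hFdim n).1
  have he2 : ∀ n, ∀ y ∈ Submodule.span 𝕜 (Set.range fun k : Fin n => e k),
      (1/2 : ℝ) ≤ ‖e n - y‖ := fun n => (rieszSeq_spec 𝕜 ↥F hFdim n).2
  set xF : ℕ → ↥F := fun n => ((8:𝕜)⁻¹ ^ n) • e n with hxF
  have h8 : ‖(8:𝕜)⁻¹‖ = (1/8 : ℝ) := by
    rw [norm_inv, RCLike.norm_ofNat]; norm_num
  have hxFnorm : ∀ n, ‖xF n‖ = (1/8:ℝ)^n := by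
    intro n
    rw [hxF, norm_smul, norm_pow, h8, he1, mul_one]
  have hgeom : Summable (fun n => (1/8:ℝ)^n) :=
    summable_geometric_of_lt_one (by norm_num) (by norm_num)
  -- summability of norms for bounded coefficients
  have hnormsum : ∀ t : ℕ → 𝕜, ∀ C : ℝ, (∀ n, ‖t n‖ ≤ C) →
      Summable (fun n => ‖t n • xF n‖) := by
    intro t C hC
    apply Summable.of_nonneg_of_le (fun n => norm_nonneg _) (fun n => ?_) (hgeom.mul_left C)
    rw [norm_smul, hxFnorm]
    exact mul_le_mul_of_nonneg_right (hC n) (by positivity)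
  have hsummable : ∀ t : ℕ → 𝕜, ∀ C : ℝ, (∀ n, ‖t n‖ ≤ C) →
      Summable (fun n => t n • xF n) := fun t C hC =>
    Summable.of_norm (hnormsum t C hC)
  -- the core independence argument
  have hcore : ∀ t : ℕ → 𝕜, ∀ C : ℝ, (∀ n, ‖t n‖ ≤ C) →
      HasSum (fun n => t n • xF n) (0 : ↥F) → ∀ n, t n = 0 := by
    intro t C hC hsum
    by_contra hne
    push_neg at hne
    obtain ⟨n0, hn0⟩ := hne
    set S := ⨆ n, ‖t n‖ with hS
    have hbdd : BddAbove (Set.range fun n => ‖t n‖) :=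
      ⟨C, by rintro _ ⟨n, rfl⟩; exact hC n⟩
    have hSle : ∀ n, ‖t n‖ ≤ S := fun n => le_ciSup hbdd n
    have hSpos : 0 < S := lt_of_lt_of_le (norm_pos_iff.mpr hn0) (hSle n0)
    obtain ⟨m, hm⟩ : ∃ m, S/2 < ‖t m‖ :=
      exists_lt_of_lt_ciSup (show S/2 < S by linarith)
    have htm : t m ≠ 0 := by
      have : (0:ℝ) < ‖t m‖ := lt_of_le_of_lt (by linarith) hm
      exact norm_pos_iff.mp this
    have hsummable' := hsum.summable
    have hkey := Summable.sum_add_tsum_nat_add (f := fun n => t n • xF n) (m+1) hsummable'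
    rw [hsum.tsum_eq, Finset.sum_range_succ] at hkey
    set v := ∑' i, t (i + (m+1)) • xF (i + (m+1)) with hv
    set u := ∑ n ∈ Finset.range m, t n • xF n with hu
    set c := t m * (8:𝕜)⁻¹ ^ m with hc
    have hc0 : c ≠ 0 := mul_ne_zero htm (pow_ne_zero _ (by norm_num))
    have hfm : t m • xF m = c • e m := by rw [hc, mul_smul]
    rw [hfm] at hkey
    -- hkey : (u + c • e m) + v = 0
    have h1 : (e m + c⁻¹ • u) + c⁻¹ • v = 0 := by
      have h0' := congrArg (fun z : ↥F => c⁻¹ • z) hkey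
      simp only [smul_add, inv_smul_smul₀ hc0, smul_zero] at h0'
      rw [← h0']; abel
    have heq : e m - (-(c⁻¹ • u)) = -(c⁻¹ • v) := by
      rw [sub_neg_eq_add]; exact eq_neg_of_add_eq_zero_left h1
    have hy : -(c⁻¹ • u) ∈ Submodule.span 𝕜 (Set.range fun k : Fin m => e k) := by
      apply Submodule.neg_mem
      apply Submodule.smul_mem
      apply Submodule.sum_mem
      intro n hn
      have hnm := Finset.mem_range.mp hn
      exact Submodule.smul_mem _ _
        (Submodule.smul_mem _ _ (Submodule.subset_span ⟨⟨n, hnm⟩, rfl⟩))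
    have half : (1/2:ℝ) ≤ ‖c‖⁻¹ * ‖v‖ := by
      have h2 := he2 m _ hy
      rwa [heq, norm_neg, norm_smul, norm_inv] at h2
    have hcpos : (0:ℝ) < ‖c‖ := norm_pos_iff.mpr hc0
    have h3 : ‖c‖ / 2 ≤ ‖v‖ := by
      have h4 := mul_le_mul_of_nonneg_right half hcpos.le
      rw [mul_comm (‖c‖⁻¹) (‖v‖), mul_assoc, inv_mul_cancel₀ hcpos.ne', mul_one] at h4
      linarith
    have hcnorm : ‖c‖ = ‖t m‖ * (1/8:ℝ)^m := by
      rw [hc, norm_mul, norm_pow, h8]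
    have hvnorm : ‖v‖ ≤ S * (1/8:ℝ)^m / 7 := by
      have hsn : Summable (fun i : ℕ => S * (1/8:ℝ)^(m+1) * (1/8:ℝ)^i) := hgeom.mul_left _
      have htail : Summable (fun i : ℕ => ‖t (i + (m+1)) • xF (i + (m+1))‖) :=
        (summable_nat_add_iff (m+1)).mpr (hnormsum t C hC)
      have h5 : ‖v‖ ≤ ∑' i : ℕ, S * (1/8:ℝ)^(m+1) * (1/8:ℝ)^i := by
        refine (norm_tsum_le_tsum_norm htail).trans ?_
        refine Summable.tsum_le_tsum (fun i => ?_) htail hsn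
        rw [norm_smul, hxFnorm, pow_add]
        calc ‖t (i + (m+1))‖ * ((1/8:ℝ)^i * (1/8:ℝ)^(m+1))
            ≤ S * ((1/8:ℝ)^i * (1/8:ℝ)^(m+1)) :=
              mul_le_mul_of_nonneg_right (hSle _) (by positivity)
          _ = S * (1/8:ℝ)^(m+1) * (1/8:ℝ)^i := by ring
      rw [tsum_mul_left, tsum_geometric_of_lt_one (by norm_num) (by norm_num)] at h5
      calc ‖v‖ ≤ S * (1/8:ℝ)^(m+1) * ((1:ℝ) - 1/8)⁻¹ := h5
        _ = S * (1/8:ℝ)^m / 7 := by rw [pow_succ]; ring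
    have hP : (0:ℝ) < (1/8:ℝ)^m := by positivity
    nlinarith [mul_pos hSpos hP, mul_lt_mul_of_pos_right hm hP]
  -- pushing HasSum in F to HasSeriesSum in E
  have hpush : ∀ (g : ℕ → ↥F) (s : ↥F), HasSum g s →
      HasSeriesSum (fun n => ((g n : E))) ((s : E)) := by
    intro g s hg
    have h1 := hg.tendsto_sum_nat
    have h2 := (continuous_subtype_val.tendsto s).comp h1
    unfold HasSeriesSum
    convert h2 using 2 with N
    simp [Function.comp]
  refine ⟨fun n => (xF n : E), fun n => (xF n).2, ?_, ?_, ?_⟩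
  · have : (fun n => ‖((xF n : E))‖) = fun n => (1/8:ℝ)^n := by
      funext n; rw [← hxFnorm n]; rfl
    rw [this]; exact hgeom
  · intro t ⟨C, hC⟩
    have hsum := (hsummable t C hC).hasSum
    have hser : HasSeriesSum (fun n => t n • ((xF n : ↥F) : E))
        (((∑' n, t n • xF n : ↥F) : E)) := by
      have := hpush _ _ hsum
      convert this using 2 with n
      rfl
    constructor
    · exact ⟨_, (∑' n, t n • xF n : ↥F).2, hser⟩
    · intro h0
      have hz : (((∑' n, t n • xF n : ↥F) : E)) = 0 := tendsto_nhds_unique hser h0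
      have hz' : (∑' n, t n • xF n : ↥F) = 0 := by
        exact_mod_cast hz
      have hs0 : HasSum (fun n => t n • xF n) (0 : ↥F) := hz' ▸ hsum
      funext n
      exact hcore t C hC hs0 n
  · have hlpb : ∀ (t : ellInfty 𝕜) (n : ℕ), ‖(t : ∀ _ : ℕ, 𝕜) n‖ ≤ ‖t‖ :=
      fun t n => lp.norm_apply_le_norm ENNReal.top_ne_zero t n
    refine ⟨{ toFun := fun t => ∑' n, (t : ∀ _ : ℕ, 𝕜) n • xF n,
              map_add' := ?_, map_smul' := ?_ }, ?_, ?_⟩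
    · intro a b
      have ha := hsummable _ _ (hlpb a)
      have hb := hsummable _ _ (hlpb b)
      show (∑' n, ((a + b : ellInfty 𝕜) : ∀ _ : ℕ, 𝕜) n • xF n)
          = (∑' n, (a : ∀ _ : ℕ, 𝕜) n • xF n) + ∑' n, (b : ∀ _ : ℕ, 𝕜) n • xF n
      rw [← Summable.tsum_add ha hb]
      apply tsum_congr
      intro n
      rw [lp.coeFn_add]
      simp [add_smul]
    · intro k a
      have ha := (hsummable _ _ (hlpb a)).hasSum
      show (∑' n, ((k • a : ellInfty 𝕜) : ∀ _ : ℕ, 𝕜) n • xF n)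
          = k • ∑' n, (a : ∀ _ : ℕ, 𝕜) n • xF n
      rw [← (ha.const_smul k).tsum_eq]
      apply tsum_congr
      intro n
      rw [lp.coeFn_smul]
      simp [smul_smul]
    · rw [← LinearMap.ker_eq_bot]
      ext a
      simp only [LinearMap.mem_ker, LinearMap.coe_mk, AddHom.coe_mk, Submodule.mem_bot]
      constructor
      · intro h0
        have hs0 : HasSum (fun n => (a : ∀ _ : ℕ, 𝕜) n • xF n) (0 : ↥F) :=
          h0 ▸ (hsummable _ _ (hlpb a)).hasSum
        apply lp.ext
        funext n
        exact hcore _ _ (hlpb a) hs0 n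
      · rintro rfl
        simp
    · intro t
      have hsum := (hsummable _ _ (hlpb t)).hasSum
      have := hpush _ _ hsum
      convert this using 2 with n
      all_goals rfl
end
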